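/- arXiv:1206.0550 — 13 statements merged into one kernel-verified Lean document; each statement's English description precedes it below -/
import Mathlib

section
/- Let X be a finite topological space. Then X is a connected space if and only if the simple graph on X, in which two distinct points x and y are adjacent if and only if x ∈ closure {y} or y ∈ closure {x}, is a connected graph. -/
/-- The underlying simple graph of a relation: distinct `x, y` are adjacent iff
`R x y` or `R y x`. -/
def underGraph {V : Type*} (R : V → V → Prop) : SimpleGraph V where
  Adj x y := x ≠ y ∧ (R x y ∨ R y x)
  symm := ⟨fun _ _ h => ⟨h.1.symm, h.2.symm⟩⟩
  loopless := ⟨fun _ h => h.1 rfl⟩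


lemma underGraph_closed_set {X : Type*} [Fintype X] [TopologicalSpace X]
    (S : Set X) (h : ∀ y ∈ S, ∀ z, z ∈ closure ({y} : Set X) → z ∈ S) :
    IsClosed S := by
  have : closure S ⊆ S := by
    have hS : S = ⋃ y ∈ S, ({y} : Set X) := by simp
    rw [hS, (Set.toFinite S).closure_biUnion]
    intro z hz
    simp only [Set.mem_iUnion] at hz
    obtain ⟨y, hy, hzy⟩ := hz
    have hyS : y ∈ S := by simpa using hy
    rw [hS]
    simpa using h y hyS z hzy
  exact isClosed_of_closure_subset this

/-- A finite topological space is connected iff its underlying graph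
(distinct `x, y` adjacent iff `x ∈ closure {y}` or `y ∈ closure {x}`) is connected. -/
theorem connectedSpace_iff_underGraph_connected
    {X : Type*} [Fintype X] [TopologicalSpace X] :
    ConnectedSpace X ↔
      (underGraph (fun x y : X => x ∈ closure ({y} : Set X))).Connected := by
  set G := underGraph (fun x y : X => x ∈ closure ({y} : Set X)) with hG
  have hadj : ∀ x y : X, x ≠ y → x ∈ closure ({y} : Set X) → G.Adj x y :=
    fun x y h hxy => ⟨h, Or.inl hxy⟩
  constructor
  · intro hX
    obtain ⟨x⟩ := hX.toNonempty
    have key : ∀ y : X, G.Reachable x y := by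
      set S : Set X := {y | G.Reachable x y} with hS
      have hclosed : IsClosed S := by
        apply underGraph_closed_set
        intro y hy z hzy
        by_cases hzy' : z = y
        · subst hzy'; exact hy
        · exact hy.trans (hadj z y hzy' hzy).symm.reachable
      have hopen : IsOpen S := by
        rw [← isClosed_compl_iff]
        apply underGraph_closed_set
        intro y hy z hzy
        intro hzS
        apply hy
        by_cases hzy' : z = y
        · subst hzy'; exact hzS
        · exact hzS.trans (hadj z y hzy' hzy).reachable
      have : S = Set.univ :=
        IsClopen.eq_univ ⟨hclosed, hopen⟩ ⟨x, SimpleGraph.Reachable.refl x⟩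
      intro y
      have : y ∈ S := this ▸ Set.mem_univ y
      exact this
    exact ⟨fun a b => (key a).symm.trans (key b)⟩
  · intro hGc
    have hne : Nonempty X := hGc.nonempty
    obtain ⟨x⟩ := hne
    rw [connectedSpace_iff_connectedComponent]
    refine ⟨x, Set.eq_univ_of_forall fun y => ?_⟩
    have h := (hGc.preconnected x y)
    obtain ⟨w⟩ := h
    induction w with
    | nil => exact mem_connectedComponent
    | cons h p ih =>
        rename_i a b c
        have hab : connectedComponent a = connectedComponent b := by
          obtain ⟨hne', hor⟩ := h
          cases hor with
          | inl hab =>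
              have hsub : closure ({b} : Set X) ⊆ connectedComponent b :=
                (isConnected_singleton.closure).subset_connectedComponent
                  (subset_closure rfl)
              exact (connectedComponent_eq (hsub hab)).symm
          | inr hba =>
              have hsub : closure ({a} : Set X) ⊆ connectedComponent a :=
                (isConnected_singleton.closure).subset_connectedComponent
                  (subset_closure rfl)
              exact connectedComponent_eq (hsub hba)
        rw [hab]
        exact ih
end

section
/- Let G be a triangle-free simple graph on a finite vertex type V (i.e., G has no 3-clique). Then there exists a preorder relation on V whose underlying graph equals G if and only if G is bipartite (2-colorable). -/
/-- A preorder relation: a reflexive and transitive relation. -/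
def IsPreorderRel {V : Type*} (R : V → V → Prop) : Prop :=
  Reflexive R ∧ Transitive R

/-- `tau G` is the number of preorder relations on `V` whose underlying graph equals `G`. -/
noncomputable def tau {V : Type*} (G : SimpleGraph V) : ℕ :=
  Nat.card {R : V → V → Prop // IsPreorderRel R ∧ underGraph R = G}

lemma noTri {V : Type*} (R : V → V → Prop) (hG : (underGraph R).CliqueFree 3)
    {a b c : V} (hab : a ≠ b) (hac : a ≠ c) (hbc : b ≠ c)
    (h1 : R a b ∨ R b a) (h2 : R a c ∨ R c a) (h3 : R b c ∨ R c b) : False := by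
  classical
  exact hG {a, b, c} (SimpleGraph.is3Clique_triple_iff.mpr ⟨⟨hab, h1⟩, ⟨hac, h2⟩, ⟨hbc, h3⟩⟩)

/-- A triangle-free graph is the underlying graph of some preorder relation iff it is
bipartite. -/
theorem triangleFree_underlying_iff_bipartite
    {V : Type*} [Fintype V] (G : SimpleGraph V) (hG : G.CliqueFree 3) :
    (∃ R : V → V → Prop, IsPreorderRel R ∧ underGraph R = G) ↔ G.Colorable 2 := by
  classical
  constructor
  · rintro ⟨R, ⟨hrefl, htrans⟩, rfl⟩
    let e := Fintype.equivFin V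
    set P : V → Prop := fun v =>
      (∃ w, R v w ∧ ¬ R w v) ∨ (∃ w, w ≠ v ∧ R v w ∧ R w v ∧ e v < e w) with hP
    -- key : strict edge forces P on tail, ¬P on head
    have key : ∀ v w : V, v ≠ w → R v w → ¬ R w v → P v ∧ ¬ P w := by
      intro v w hvw hvwR hwvR
      constructor
      · exact Or.inl ⟨w, hvwR, hwvR⟩
      · rintro (⟨u, hwu, huw⟩ | ⟨u, huw, hwu, huw', _⟩)
        · have huv : u ≠ v := by rintro rfl; exact huw hvwR
          have huw2 : u ≠ w := by rintro rfl; exact huw hwu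
          exact noTri R hG hvw (Ne.symm huv) (Ne.symm huw2)
            (Or.inl hvwR) (Or.inl (htrans hvwR hwu)) (Or.inl hwu)
        · have huv : u ≠ v := by rintro rfl; exact hwvR hwu
          exact noTri R hG hvw (Ne.symm huv) (Ne.symm huw)
            (Or.inl hvwR) (Or.inl (htrans hvwR hwu)) (Or.inl hwu)
    -- equivalent pair : P v iff e v < e w
    have keq : ∀ v w : V, v ≠ w → R v w → R w v → (P v ↔ e v < e w) := by
      intro v w hvw hvwR hwvR
      constructor
      · rintro (⟨u, hvu, huv⟩ | ⟨u, huv, hvu, huv', hlt⟩)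
        · have huw : u ≠ w := by rintro rfl; exact huv hwvR
          have huv2 : u ≠ v := by rintro rfl; exact huv hvu
          exact absurd (noTri R hG hvw (Ne.symm huv2) (Ne.symm huw)
            (Or.inl hvwR) (Or.inl hvu) (Or.inl (htrans hwvR hvu))) (fun h => h)
        · rcases eq_or_ne u w with rfl | huw
          · exact hlt
          · exact absurd (noTri R hG hvw (Ne.symm huv) (Ne.symm huw)
              (Or.inl hvwR) (Or.inl hvu) (Or.inl (htrans hwvR hvu))) (fun h => h)
      · intro hlt
        exact Or.inr ⟨w, Ne.symm hvw, hvwR, hwvR, hlt⟩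
    refine ⟨SimpleGraph.Coloring.mk (fun v => if P v then (0 : Fin 2) else 1) ?_⟩
    rintro v w ⟨hvw, hor⟩
    by_cases h1 : R v w <;> by_cases h2 : R w v
    · have hv := keq v w hvw h1 h2
      have hw := keq w v (Ne.symm hvw) h2 h1
      have hne : e v ≠ e w := fun h => hvw (e.injective h)
      rcases lt_or_gt_of_ne hne with hlt | hlt
      · have h3 : ¬ P w := fun hPw => lt_asymm hlt (hw.mp hPw)
        simp [hv.mpr hlt, h3]
      · have h3 : ¬ P v := fun hPv => lt_asymm hlt (hv.mp hPv)
        simp [hw.mpr hlt, h3]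
    · obtain ⟨hPv, hPw⟩ := key v w hvw h1 h2
      simp [hPv, hPw]
    · obtain ⟨hPw, hPv⟩ := key w v (Ne.symm hvw) h2 h1
      simp [hPv, hPw]
    · rcases hor with h | h
      · exact absurd h h1
      · exact absurd h h2
  · rintro ⟨C⟩
    refine ⟨fun x y => x = y ∨ (G.Adj x y ∧ C x = 0), ⟨fun x => Or.inl rfl, ?_⟩, ?_⟩
    · rintro x y z (rfl | ⟨hxy, hcx⟩) h2
      · exact h2
      · rcases h2 with rfl | ⟨hyz, hcy⟩
        · exact Or.inr ⟨hxy, hcx⟩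
        · exfalso
          have := C.valid hxy
          rw [hcx, hcy] at this
          exact this rfl
    · ext x y
      simp only [underGraph, ne_eq]
      constructor
      · rintro ⟨hne, (rfl | ⟨h, _⟩) | (rfl | ⟨h, _⟩)⟩
        · exact absurd rfl hne
        · exact h
        · exact absurd rfl hne
        · exact h.symm
      · intro h
        refine ⟨h.ne, ?_⟩
        have hvc := C.valid h
        have : C x = 0 ∨ C y = 0 := by
          have : ∀ a b : Fin 2, a ≠ b → a = 0 ∨ b = 0 := by decide
          exact this _ _ hvc
        rcases this with hc | hc
        · exact Or.inl (Or.inr ⟨h, hc⟩)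
        · exact Or.inr (Or.inr ⟨h.symm, hc⟩)
end

section
/- Let G be a connected bipartite (2-colorable) simple graph on a finite vertex type V with at least 3 vertices. Then τ(G) = 2, i.e., there are exactly two preorder relations on V whose underlying graph equals G. -/
/-- Candidate preorder: equality, or an edge whose source has color `i`. -/
def Rcand {V : Type*} (G : SimpleGraph V) (c : G.Coloring (Fin 2)) (i : Fin 2) :
    V → V → Prop :=
  fun x y => x = y ∨ (G.Adj x y ∧ c x = i)

/-- A connected bipartite graph on at least 3 vertices has exactly 2 preorder relations
with that underlying graph. -/
theorem tau_of_connected_bipartite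
    {V : Type*} [Fintype V] (G : SimpleGraph V) (hc : G.Connected)
    (hb : G.Colorable 2) (h3 : 3 ≤ Fintype.card V) :
    tau G = 2 := by
  classical
  obtain ⟨c⟩ := hb
  have fin2a : ∀ p q r : Fin 2, p ≠ q → q ≠ r → p = r := by decide
  have fin2b : ∀ j : Fin 2, j = 0 ∨ j = 1 := by decide
  have fin2c : ∀ p q i : Fin 2, p ≠ q → (q = i ↔ ¬ p = i) := by decide
  have fin2d : ∀ p q i : Fin 2, p ≠ q → p = i ∨ q = i := by decide
  -- triangle-freeness
  have htf : ∀ {x y z : V}, G.Adj x y → G.Adj y z → x ≠ z → ¬ G.Adj x z := by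
    intro x y z hxy hyz _ hadj
    exact (c.valid hadj) (fin2a _ _ _ (c.valid hxy) (c.valid hyz))
  -- there exists an edge
  obtain ⟨a, b, hab⟩ : ∃ a b, G.Adj a b := by
    obtain ⟨x0, y0, hxy0⟩ := Fintype.exists_pair_of_one_lt_card (α := V) (by omega)
    obtain ⟨w⟩ := hc.preconnected x0 y0
    cases w with
    | nil => exact absurd rfl hxy0
    | cons h _ => exact ⟨_, _, h⟩
  -- the two candidates are preorders with underlying graph G
  have hmem : ∀ i, IsPreorderRel (Rcand G c i) ∧ underGraph (Rcand G c i) = G := by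
    intro i
    refine ⟨⟨fun x => Or.inl rfl, ?_⟩, ?_⟩
    · intro x y z hxy hyz
      rcases hxy with rfl | ⟨hadj, hcx⟩
      · exact hyz
      · rcases hyz with rfl | ⟨hadj', hcy⟩
        · exact Or.inr ⟨hadj, hcx⟩
        · exact absurd (hcx.trans hcy.symm) (c.valid hadj)
    · ext x y
      show (x ≠ y ∧ (Rcand G c i x y ∨ Rcand G c i y x)) ↔ G.Adj x y
      constructor
      · rintro ⟨hne, (rfl | ⟨h, _⟩) | (rfl | ⟨h, _⟩)⟩
        · exact absurd rfl hne
        · exact h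
        · exact absurd rfl hne
        · exact h.symm
      · intro h
        refine ⟨h.ne, ?_⟩
        rcases fin2d (c x) (c y) i (c.valid h) with hx | hy
        · exact Or.inl (Or.inr ⟨h, hx⟩)
        · exact Or.inr (Or.inr ⟨h.symm, hy⟩)
  -- classification
  have hclass : ∀ R : V → V → Prop, IsPreorderRel R → underGraph R = G →
      R = Rcand G c 0 ∨ R = Rcand G c 1 := by
    rintro R ⟨hrefl, htrans⟩ hG
    have hAdj : ∀ x y, G.Adj x y ↔ (x ≠ y ∧ (R x y ∨ R y x)) := by
      intro x y; rw [← hG]; exact Iff.rfl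
    have hA : ∀ x y, x ≠ y → R x y → G.Adj x y :=
      fun x y hne h => (hAdj x y).2 ⟨hne, Or.inl h⟩
    -- no two-way relations between distinct vertices
    have hB : ∀ x y, x ≠ y → R x y → ¬ R y x := by
      intro x y hne hxy hyx
      have hadjxy : G.Adj x y := hA x y hne hxy
      obtain ⟨z, hzx, hzy⟩ : ∃ z, z ≠ x ∧ z ≠ y := by
        by_contra hcon
        push_neg at hcon
        have hsub : (Finset.univ : Finset V) ⊆ {x, y} := by
          intro z _
          by_cases hzx : z = x
          · simp [hzx]
          · simp [hcon z hzx]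
        have h1 := (Finset.card_le_card hsub).trans (Finset.card_insert_le x {y})
        simp [Finset.card_univ] at h1
        omega
      obtain ⟨p⟩ := hc.preconnected z x
      obtain ⟨d, _, hdS, hdS'⟩ :=
        p.exists_boundary_dart {w | w ≠ x ∧ w ≠ y} ⟨hzx, hzy⟩ (by simp)
      obtain ⟨hux, huy⟩ := hdS
      have hadj : G.Adj d.fst d.snd := d.adj
      have hsnd : d.snd = x ∨ d.snd = y := by
        by_contra hcon; push_neg at hcon; exact hdS' ⟨hcon.1, hcon.2⟩
      rcases hsnd with h1 | h1
      · have haux : G.Adj d.fst x := h1 ▸ hadj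
        have hnux : ¬ G.Adj d.fst y := htf haux hadjxy huy
        rcases (hAdj d.fst x).1 haux with ⟨_, hR | hR⟩
        · exact hnux (hA d.fst y huy (htrans hR hxy))
        · exact hnux ((hA y d.fst (Ne.symm huy) (htrans hyx hR)).symm)
      · have hauy : G.Adj d.fst y := h1 ▸ hadj
        have hnux : ¬ G.Adj d.fst x := htf hauy hadjxy.symm hux
        rcases (hAdj d.fst y).1 hauy with ⟨_, hR | hR⟩
        · exact hnux (hA d.fst x hux (htrans hR hyx))
        · exact hnux ((hA x d.fst (Ne.symm hux) (htrans hxy hR)).symm)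
    -- a vertex relates to all its neighbors the same way
    have hF' : ∀ w u v, G.Adj w u → G.Adj w v → R w u → R w v := by
      intro w u v hwu hwv hR
      by_cases huv : u = v
      · exact huv ▸ hR
      · by_contra hnR
        rcases (hAdj w v).1 hwv with ⟨_, h | h⟩
        · exact hnR h
        · exact htf hwv.symm hwu (Ne.symm huv) (hA v u (Ne.symm huv) (htrans h hR))
    -- propagation along an edge
    have hstep : ∀ (i : Fin 2) u x, G.Adj u x →
        (∀ w, G.Adj u w → (R u w ↔ c u = i)) →
        (∀ w, G.Adj x w → (R x w ↔ c x = i)) := by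
      intro i u x hux hu w hxw
      have h1 : R x w ↔ R x u :=
        ⟨fun h => hF' x w u hxw hux.symm h, fun h => hF' x u w hux.symm hxw h⟩
      have h2 : R x u ↔ ¬ R u x := by
        constructor
        · intro h; exact fun h' => hB u x hux.ne h' h
        · intro h
          rcases (hAdj u x).1 hux with ⟨_, h' | h'⟩
          · exact absurd h' h
          · exact h'
      rw [h1, h2, not_congr (hu x hux)]
      exact (fin2c _ _ _ (c.valid hux)).symm
    -- propagation along walks
    have hwalk : ∀ (i : Fin 2) {u v : V}, G.Walk u v →
        (∀ w, G.Adj u w → (R u w ↔ c u = i)) →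
        (∀ w, G.Adj v w → (R v w ↔ c v = i)) := by
      intro i u v p
      induction p with
      | nil => exact id
      | cons h _ ih => exact fun hu => ih (hstep i _ _ h hu)
    set i : Fin 2 := if R a b then c a else c b with hidef
    have hQa : ∀ w, G.Adj a w → (R a w ↔ c a = i) := by
      intro w hw
      by_cases hRab : R a b
      · rw [hidef, if_pos hRab]
        exact ⟨fun _ => rfl, fun _ => hF' a b w hab hw hRab⟩
      · rw [hidef, if_neg hRab]
        constructor
        · intro h; exact absurd (hF' a w b hw hab h) hRab
        · intro h; exact absurd h (c.valid hab)
    have hQ : ∀ v w, G.Adj v w → (R v w ↔ c v = i) := by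
      intro v w hvw
      obtain ⟨p⟩ := hc.preconnected a v
      exact hwalk i p hQa w hvw
    have hReq : R = Rcand G c i := by
      funext x y
      apply propext
      constructor
      · intro h
        by_cases hxy : x = y
        · exact Or.inl hxy
        · have hadj : G.Adj x y := hA x y hxy h
          exact Or.inr ⟨hadj, (hQ x y hadj).1 h⟩
      · rintro (rfl | ⟨hadj, hcx⟩)
        · exact hrefl x
        · exact (hQ x y hadj).2 hcx
    rcases fin2b i with h0 | h0
    · exact Or.inl (h0 ▸ hReq)
    · exact Or.inr (h0 ▸ hReq)
  have hset : {R : V → V → Prop | IsPreorderRel R ∧ underGraph R = G}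
      = {Rcand G c 0, Rcand G c 1} := by
    ext R
    simp only [Set.mem_setOf_eq, Set.mem_insert_iff, Set.mem_singleton_iff]
    constructor
    · rintro ⟨h1, h2⟩; exact hclass R h1 h2
    · rintro (rfl | rfl)
      · exact hmem 0
      · exact hmem 1
  have hne01 : Rcand G c 0 ≠ Rcand G c 1 := by
    intro h
    have h' : Rcand G c 0 a b ↔ Rcand G c 1 a b := by rw [h]
    rcases fin2b (c a) with h0 | h0
    · rcases h'.1 (Or.inr ⟨hab, h0⟩) with rfl | ⟨_, h1⟩
      · exact hab.ne rfl
      · rw [h0] at h1; exact absurd h1 (by decide)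
    · rcases h'.2 (Or.inr ⟨hab, h0⟩) with rfl | ⟨_, h1⟩
      · exact hab.ne rfl
      · rw [h0] at h1; exact absurd h1 (by decide)
  calc tau G
      = Set.ncard {R : V → V → Prop | IsPreorderRel R ∧ underGraph R = G} :=
        (Nat.card_coe_set_eq _).symm
    _ = ({Rcand G c 0, Rcand G c 1} : Set (V → V → Prop)).ncard := by rw [hset]
    _ = 2 := Set.ncard_pair hne01
end

section
/- Let G be a connected bipartite simple graph on a finite vertex type V with at least 3 vertices, and let X₁, X₂ be the two color classes of a proper 2-coloring of G (so every edge of G joins X₁ to X₂). Then ℏ(G) = 1 if there exists a graph automorphism σ of G with σ(X₁) = X₂, and ℏ(G) = 2 otherwise. -/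
/-- Isomorphism of preorder relations with the same underlying graph, as a setoid. -/
def preSetoid {V : Type*} (G : SimpleGraph V) :
    Setoid {R : V → V → Prop // IsPreorderRel R ∧ underGraph R = G} where
  r R R' := ∃ σ : V ≃ V, ∀ x y, R.1 x y ↔ R'.1 (σ x) (σ y)
  iseqv := by
    constructor
    · intro R; exact ⟨Equiv.refl V, fun x y => Iff.rfl⟩
    · rintro R R' ⟨σ, h⟩
      exact ⟨σ.symm, fun x y => by
        simpa using (h (σ.symm x) (σ.symm y)).symm⟩
    · rintro R R' R'' ⟨σ, h⟩ ⟨σ', h'⟩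
      exact ⟨σ.trans σ', fun x y => (h x y).trans (h' (σ x) (σ y))⟩

/-- `hbar G` is the number of isomorphism classes of preorder relations on `V`
whose underlying graph equals `G`. -/
noncomputable def hbar {V : Type*} (G : SimpleGraph V) : ℕ :=
  Nat.card (Quotient (preSetoid G))

namespace HbarAux

variable {V : Type*} {G : SimpleGraph V}

lemma exists_adj [Fintype V] (hc : G.Connected) (h3 : 3 ≤ Fintype.card V) (x : V) :
    ∃ y, G.Adj x y := by
  have h2 : 1 < Fintype.card V := by omega
  obtain ⟨y, hy⟩ := Fintype.exists_ne_of_one_lt_card h2 x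
  obtain ⟨w⟩ := hc.preconnected x y
  cases w with
  | nil => exact absurd rfl hy.symm
  | cons h _ => exact ⟨_, h⟩

lemma exists_third [Fintype V] (hc : G.Connected) (h3 : 3 ≤ Fintype.card V) {x y : V}
    (hxy : x ≠ y) : ∃ z, z ≠ x ∧ z ≠ y ∧ (G.Adj x z ∨ G.Adj y z) := by
  classical
  by_contra hcon
  push_neg at hcon
  have step : ∀ u v : V, G.Adj u v → (u = x ∨ u = y) → (v = x ∨ v = y) := by
    intro u v huv hu
    by_contra hv
    push_neg at hv
    rcases hu with rfl | rfl
    · exact (hcon v hv.1 hv.2).1 huv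
    · exact (hcon v hv.1 hv.2).2 huv
  have walkprop : ∀ (u v : V) (w : G.Walk u v), (u = x ∨ u = y) → (v = x ∨ v = y) := by
    intro u v w
    induction w with
    | nil => exact id
    | cons h p ih => intro hu; exact ih (step _ _ h hu)
  have all : ∀ v, v = x ∨ v = y := fun v =>
    walkprop x v (hc.preconnected x v).some (Or.inl rfl)
  have hsub : (Finset.univ : Finset V) ⊆ {x, y} := by
    intro v _
    rcases all v with rfl | rfl <;> simp
  have : Fintype.card V ≤ 2 := by
    calc Fintype.card V = Finset.univ.card := rfl
      _ ≤ ({x, y} : Finset V).card := Finset.card_le_card hsub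
      _ ≤ 2 := (Finset.card_insert_le _ _).trans (by simp)
  omega

lemma no_triangle (C : G.Coloring (Fin 2)) {x y z : V}
    (h1 : G.Adj x y) (h2 : G.Adj x z) (h3 : G.Adj y z) : False := by
  have c1 := C.valid h1
  have c2 := C.valid h2
  have c3 := C.valid h3
  omega

/-- The canonical preorder with sources colored `i`. -/
def Rc (G : SimpleGraph V) (C : G.Coloring (Fin 2)) (i : Fin 2) : V → V → Prop :=
  fun x y => x = y ∨ (G.Adj x y ∧ C x = i)

lemma Rc_pre (C : G.Coloring (Fin 2)) (i : Fin 2) : IsPreorderRel (Rc G C i) := by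
  constructor
  · intro x; exact Or.inl rfl
  · rintro x y z (rfl | ⟨hxy, hcx⟩) h2
    · exact h2
    rcases h2 with rfl | ⟨hyz, hcy⟩
    · exact Or.inr ⟨hxy, hcx⟩
    · exact absurd (hcx.trans hcy.symm) (C.valid hxy)

lemma Rc_under (C : G.Coloring (Fin 2)) (i : Fin 2) : underGraph (Rc G C i) = G := by
  ext x y
  constructor
  · rintro ⟨hne, (rfl | ⟨h, _⟩) | (rfl | ⟨h, _⟩)⟩
    · exact absurd rfl hne
    · exact h
    · exact absurd rfl hne
    · exact h.symm
  · intro h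
    refine ⟨h.ne, ?_⟩
    have := C.valid h
    rcases (by omega : C x = i ∨ C y = i) with hx | hy
    · exact Or.inl (Or.inr ⟨h, hx⟩)
    · exact Or.inr (Or.inr ⟨h.symm, hy⟩)

lemma classify [Fintype V] (hc : G.Connected) (h3 : 3 ≤ Fintype.card V)
    (C : G.Coloring (Fin 2)) {R : V → V → Prop} (hR : IsPreorderRel R)
    (hG : underGraph R = G) : R = Rc G C 0 ∨ R = Rc G C 1 := by
  classical
  obtain ⟨hrefl, htrans⟩ := hR
  have adj_iff : ∀ x y, G.Adj x y ↔ (x ≠ y ∧ (R x y ∨ R y x)) := by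
    intro x y; rw [← hG]; rfl
  -- antisymmetry
  have antisym : ∀ x y, x ≠ y → R x y → R y x → False := by
    intro x y hne hxy hyx
    have hadjxy : G.Adj x y := (adj_iff x y).2 ⟨hne, Or.inl hxy⟩
    obtain ⟨z, hzx, hzy, hz⟩ := exists_third hc h3 hne
    rcases hz with hxz | hyz
    · rcases ((adj_iff x z).1 hxz).2 with h | h
      · exact no_triangle C hadjxy hxz ((adj_iff y z).2 ⟨Ne.symm hzy, Or.inl (htrans hyx h)⟩)
      · exact no_triangle C hadjxy hxz ((adj_iff y z).2 ⟨Ne.symm hzy, Or.inr (htrans h hxy)⟩)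
    · rcases ((adj_iff y z).1 hyz).2 with h | h
      · exact no_triangle C hadjxy ((adj_iff x z).2 ⟨Ne.symm hzx, Or.inl (htrans hxy h)⟩) hyz
      · exact no_triangle C hadjxy ((adj_iff x z).2 ⟨Ne.symm hzx, Or.inr (htrans h hyx)⟩) hyz
  -- no chains of length two
  have nochain : ∀ x y z, x ≠ y → y ≠ z → x ≠ z → R x y → R y z → False := by
    intro x y z hxy hyz hxz h1 h2
    exact no_triangle C ((adj_iff x y).2 ⟨hxy, Or.inl h1⟩)
      ((adj_iff x z).2 ⟨hxz, Or.inl (htrans h1 h2)⟩)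
      ((adj_iff y z).2 ⟨hyz, Or.inl h2⟩)
  have notSrc : ∀ u v, u ≠ v → R u v → ∀ a, v ≠ a → ¬ R v a := by
    intro u v hne huv a hva hvA
    by_cases hua : u = a
    · subst hua; exact antisym u v hne huv hvA
    · exact nochain u v a hne hva hua huv hvA
  let c : V → Fin 2 := fun v => if ∃ a, v ≠ a ∧ R v a then 0 else 1
  have c_src : ∀ u v, u ≠ v → R u v → c u = 0 ∧ c v = 1 := by
    intro u v hne huv
    constructor
    · show (if ∃ a, u ≠ a ∧ R u a then (0 : Fin 2) else 1) = 0
      exact if_pos ⟨v, hne, huv⟩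
    · have hn : ¬ ∃ a, v ≠ a ∧ R v a := by
        rintro ⟨a, hva, hvA⟩
        exact notSrc u v hne huv a hva hvA
      show (if ∃ a, v ≠ a ∧ R v a then (0 : Fin 2) else 1) = 1
      exact if_neg hn
  have c_edge : ∀ u v, G.Adj u v → c u ≠ c v := by
    intro u v huv
    rcases ((adj_iff u v).1 huv).2 with h | h
    · obtain ⟨h0, h1⟩ := c_src u v huv.ne h
      omega
    · obtain ⟨h0, h1⟩ := c_src v u huv.ne' h
      omega
  -- c agrees with C everywhere or nowhere
  have prop : ∀ (u v : V) (w : G.Walk u v), (c u = C u) → c v = C v := by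
    intro u v w
    induction w with
    | nil => exact id
    | cons h p ih =>
      intro hu
      apply ih
      have h1 := c_edge _ _ h
      have h2 := C.valid h
      omega
  obtain ⟨x₀⟩ := Fintype.card_pos_iff.1 (by omega : 0 < Fintype.card V)
  have key : ∀ (i : Fin 2), (∀ v, c v = C v + i) →
      R = Rc G C i := by
    intro i hi
    funext x y
    apply propext
    constructor
    · intro hxy
      by_cases hne : x = y
      · exact Or.inl hne
      · refine Or.inr ⟨(adj_iff x y).2 ⟨hne, Or.inl hxy⟩, ?_⟩
        have h0 := (c_src x y hne hxy).1
        have := hi x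
        omega
    · rintro (rfl | ⟨hadj, hcx⟩)
      · exact hrefl x
      · rcases ((adj_iff x y).1 hadj).2 with h | h
        · exact h
        · exfalso
          have h0 := (c_src y x hadj.ne' h).2
          have := hi x
          omega
  by_cases h0 : c x₀ = C x₀
  · left
    apply key 0
    intro v
    have := prop x₀ v (hc.preconnected x₀ v).some h0
    omega
  · right
    apply key 1
    intro v
    have : ¬ c v = C v := fun h => h0 (prop v x₀ (hc.preconnected v x₀).some h)
    have hcv := (c_edge v ((exists_adj hc h3 v).choose) (exists_adj hc h3 v).choose_spec)
    omega

end HbarAux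

/-- For a connected bipartite graph on at least 3 vertices with color classes `X₁, X₂`,
`ℏ(G) = 1` if some automorphism maps `X₁` onto `X₂`, and `ℏ(G) = 2` otherwise. -/
theorem hbar_of_connected_bipartite
    {V : Type*} [Fintype V] (G : SimpleGraph V) (hc : G.Connected)
    (h3 : 3 ≤ Fintype.card V) (C : G.Coloring (Fin 2)) :
    ((∃ σ : G ≃g G, ⇑σ '' {v | C v = 0} = {v | C v = 1}) → hbar G = 1) ∧
    ((¬ ∃ σ : G ≃g G, ⇑σ '' {v | C v = 0} = {v | C v = 1}) → hbar G = 2) := by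
  classical
  let T := {R : V → V → Prop // IsPreorderRel R ∧ underGraph R = G}
  let e₀ : T := ⟨HbarAux.Rc G C 0, HbarAux.Rc_pre C 0, HbarAux.Rc_under C 0⟩
  let e₁ : T := ⟨HbarAux.Rc G C 1, HbarAux.Rc_pre C 1, HbarAux.Rc_under C 1⟩
  have hclass : ∀ e : T, e = e₀ ∨ e = e₁ := by
    rintro ⟨R, hR, hG⟩
    rcases HbarAux.classify hc h3 C hR hG with h | h
    · left; exact Subtype.ext h
    · right; exact Subtype.ext h
  have hnb := HbarAux.exists_adj hc h3
  have hCiff : ∀ v : V, C v = 0 ∨ C v = 1 := fun v => by omega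
  have rel_iff : (preSetoid G).r e₀ e₁ ↔
      ∃ σ : G ≃g G, ⇑σ '' {v | C v = 0} = {v | C v = 1} := by
    constructor
    · rintro ⟨σ, h⟩
      have A : ∀ x, C x = 0 → C (σ x) = 1 := by
        intro x hx
        obtain ⟨y, hy⟩ := hnb x
        rcases (h x y).1 (Or.inr ⟨hy, hx⟩) with heq | ⟨hadj, hc1⟩
        · exact absurd (σ.injective heq) hy.ne
        · exact hc1
      have B : ∀ x, C x = 1 → C (σ x) = 0 := by
        intro x hx
        obtain ⟨y, hy⟩ := hnb x
        have hy0 : C y = 0 := by have := C.valid hy; omega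
        rcases (h y x).1 (Or.inr ⟨hy.symm, hy0⟩) with heq | ⟨hadj, hc1⟩
        · exact absurd (σ.injective heq) hy.ne'
        · have := C.valid hadj; omega
      have hadj_iff : ∀ x y, G.Adj (σ x) (σ y) ↔ G.Adj x y := by
        intro x y
        constructor
        · intro hA
          have hxy : x ≠ y := fun e => hA.ne (congrArg σ e)
          rcases hCiff (σ x) with h1 | h1
          · have h2 : C (σ y) = 1 := by have := C.valid hA; omega
            rcases (h y x).2 (Or.inr ⟨hA.symm, h2⟩) with heq | ⟨hadj, _⟩
            · exact absurd heq hxy.symm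
            · exact hadj.symm
          · rcases (h x y).2 (Or.inr ⟨hA, h1⟩) with heq | ⟨hadj, _⟩
            · exact absurd heq hxy
            · exact hadj
        · intro hA
          have hxy : σ x ≠ σ y := fun e => hA.ne (σ.injective e)
          rcases hCiff x with h1 | h1
          · rcases (h x y).1 (Or.inr ⟨hA, h1⟩) with heq | ⟨hadj, _⟩
            · exact absurd heq hxy
            · exact hadj
          · have h2 : C y = 0 := by have := C.valid hA; omega
            rcases (h y x).1 (Or.inr ⟨hA.symm, h2⟩) with heq | ⟨hadj, _⟩
            · exact absurd heq hxy.symm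
            · exact hadj.symm
      refine ⟨⟨σ, fun {a b} => hadj_iff a b⟩, ?_⟩
      ext v
      simp only [Set.mem_image, Set.mem_setOf_eq]
      constructor
      · rintro ⟨x, hx, rfl⟩
        exact A x hx
      · intro hv
        refine ⟨σ.symm v, ?_, σ.apply_symm_apply v⟩
        rcases hCiff (σ.symm v) with h1 | h1
        · exact h1
        · have := B _ h1
          rw [σ.apply_symm_apply] at this
          omega
    · rintro ⟨σ, himg⟩
      have hA : ∀ v, C v = 0 → C (σ v) = 1 := by
        intro v hv
        have : σ v ∈ ⇑σ '' {v | C v = 0} := ⟨v, hv, rfl⟩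
        rw [himg] at this
        exact this
      have hB : ∀ v, C (σ v) = 1 → C v = 0 := by
        intro v hv
        have : σ v ∈ (⇑σ '' {v | C v = 0}) := by rw [himg]; exact hv
        obtain ⟨w, hw, hwv⟩ := this
        rwa [σ.injective hwv] at hw
      refine ⟨σ.toEquiv, fun x y => ?_⟩
      constructor
      · rintro (rfl | ⟨hadj, hx⟩)
        · exact Or.inl rfl
        · exact Or.inr ⟨σ.map_rel_iff.2 hadj, hA x hx⟩
      · rintro (heq | ⟨hadj, hx1⟩)
        · exact Or.inl (σ.injective heq)
        · exact Or.inr ⟨σ.map_rel_iff.1 hadj, hB x hx1⟩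
  constructor
  · intro hσ
    have hrel := rel_iff.2 hσ
    have h1 : Nat.card (Quotient (preSetoid G)) = 1 := by
      rw [Nat.card_eq_one_iff_unique]
      refine ⟨⟨fun q q' => ?_⟩, ⟨Quotient.mk _ e₀⟩⟩
      induction q using Quotient.inductionOn with
      | h a =>
        induction q' using Quotient.inductionOn with
        | h b =>
          apply Quotient.sound
          rcases hclass a with rfl | rfl <;> rcases hclass b with rfl | rfl
          · exact (preSetoid G).refl _
          · exact hrel
          · exact (preSetoid G).symm hrel
          · exact (preSetoid G).refl _
    exact h1
  · intro hσ
    have hnrel : ¬ (preSetoid G).r e₀ e₁ := fun h => hσ (rel_iff.1 h)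
    have h2 : Nat.card (Quotient (preSetoid G)) = 2 := by
      rw [Nat.card_eq_two_iff]
      refine ⟨Quotient.mk _ e₀, Quotient.mk _ e₁, ?_, ?_⟩
      · intro h
        exact hnrel (Quotient.exact h)
      · ext q
        simp only [Set.mem_insert_iff, Set.mem_singleton_iff, Set.mem_univ, iff_true]
        induction q using Quotient.inductionOn with
        | h a =>
          rcases hclass a with rfl | rfl
          · exact Or.inl rfl
          · exact Or.inr rfl
    exact h2
end

section
/- Let G be a connected simple graph on a finite vertex type V and H a connected simple graph on a finite vertex type W, and assume G and H are not isomorphic as simple graphs. Then ℏ(G ⊕ H) = ℏ(G) · ℏ(H), where G ⊕ H is the disjoint union on V ⊕ W. -/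
namespace HbarAux
open Sum

variable {V W : Type*} {G : SimpleGraph V} {H : SimpleGraph W}


lemma cross_not {R : V ⊕ W → V ⊕ W → Prop} (hR : underGraph R = G ⊕g H)
    (x : V) (y : W) : ¬ R (inl x) (inr y) ∧ ¬ R (inr y) (inl x) := by
  have h1 : ¬ (G ⊕g H).Adj (inl x) (inr y) := by simp
  rw [← hR] at h1
  exact ⟨fun hr => h1 ⟨by simp, Or.inl hr⟩, fun hr => h1 ⟨by simp, Or.inr hr⟩⟩

def joinRel (P : V → V → Prop) (Q : W → W → Prop) : V ⊕ W → V ⊕ W → Prop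
  | inl x, inl y => P x y
  | inr x, inr y => Q x y
  | _, _ => False

lemma joinRel_pre {P : V → V → Prop} {Q : W → W → Prop}
    (hP : IsPreorderRel P) (hQ : IsPreorderRel Q) : IsPreorderRel (joinRel P Q) := by
  constructor
  · intro a; cases a
    · exact hP.1 _
    · exact hQ.1 _
  · intro a b c hab hbc
    cases a <;> cases b <;> cases c <;>
      first
        | exact hab.elim
        | exact hbc.elim
        | exact hP.2 hab hbc
        | exact hQ.2 hab hbc

lemma joinRel_under (P : V → V → Prop) (Q : W → W → Prop) :
    underGraph (joinRel P Q) = underGraph P ⊕g underGraph Q := by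
  ext a b
  cases a <;> cases b <;>
    simp [underGraph, joinRel, SimpleGraph.sum_adj, ne_eq]

lemma under_restrict_left {R : V ⊕ W → V ⊕ W → Prop} (hR : underGraph R = G ⊕g H) :
    underGraph (fun x y => R (inl x) (inl y)) = G := by
  ext x y
  have h : (G ⊕g H).Adj (inl x) (inl y) ↔ G.Adj x y := by simp
  rw [← hR] at h
  rw [← h]
  show (x ≠ y ∧ _) ↔ (inl x ≠ inl y ∧ _)
  simp [ne_eq]

lemma under_restrict_right {R : V ⊕ W → V ⊕ W → Prop} (hR : underGraph R = G ⊕g H) :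
    underGraph (fun x y => R (inr x) (inr y)) = H := by
  ext x y
  have h : (G ⊕g H).Adj (inr x) (inr y) ↔ H.Adj x y := by simp
  rw [← hR] at h
  rw [← h]
  show (x ≠ y ∧ _) ↔ (inr x ≠ inr y ∧ _)
  simp [ne_eq]

variable (G H) in
def splitEquiv :
    {R : V ⊕ W → V ⊕ W → Prop // IsPreorderRel R ∧ underGraph R = G ⊕g H} ≃
    {P : V → V → Prop // IsPreorderRel P ∧ underGraph P = G} ×
    {Q : W → W → Prop // IsPreorderRel Q ∧ underGraph Q = H} where
  toFun R :=
    (⟨fun x y => R.1 (inl x) (inl y),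
      ⟨fun x => R.2.1.1 _, fun _ _ _ h h' => R.2.1.2 h h'⟩, under_restrict_left R.2.2⟩,
     ⟨fun x y => R.1 (inr x) (inr y),
      ⟨fun x => R.2.1.1 _, fun _ _ _ h h' => R.2.1.2 h h'⟩, under_restrict_right R.2.2⟩)
  invFun PQ :=
    ⟨joinRel PQ.1.1 PQ.2.1, joinRel_pre PQ.1.2.1 PQ.2.2.1,
     by rw [joinRel_under, PQ.1.2.2, PQ.2.2.2]⟩
  left_inv R := by
    refine Subtype.ext (funext₂ fun a b => propext ?_)
    cases a <;> cases b
    · exact Iff.rfl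
    case inl.inr x y =>
      exact ⟨fun h => h.elim, fun h => ((cross_not R.2.2 x y).1 h).elim⟩
    case inr.inl y x =>
      exact ⟨fun h => h.elim, fun h => ((cross_not R.2.2 x y).2 h).elim⟩
    · exact Iff.rfl
  right_inv PQ := rfl



lemma sum_reachable_isLeft {a b : V ⊕ W} (h : (G ⊕g H).Reachable a b) :
    a.isLeft = b.isLeft := by
  obtain ⟨w⟩ := h
  induction w with
  | nil => rfl
  | @cons u v _ h p ih =>
    refine Eq.trans ?_ ih
    cases u <;> cases v <;> simp_all [SimpleGraph.sum_adj]

lemma rel_forward [Finite V] [Finite W]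
    (hG : G.Connected) (hH : H.Connected) (hni : ¬ Nonempty (G ≃g H))
    (R R' : {R : V ⊕ W → V ⊕ W → Prop // IsPreorderRel R ∧ underGraph R = G ⊕g H})
    (σ : V ⊕ W ≃ V ⊕ W) (hσ : ∀ x y, R.1 x y ↔ R'.1 (σ x) (σ y)) :
    (∃ τ : V ≃ V, ∀ x y, R.1 (inl x) (inl y) ↔ R'.1 (inl (τ x)) (inl (τ y))) ∧
    (∃ τ : W ≃ W, ∀ x y, R.1 (inr x) (inr y) ↔ R'.1 (inr (τ x)) (inr (τ y))) := by
  have hadj : ∀ a b, (G ⊕g H).Adj a b ↔ (G ⊕g H).Adj (σ a) (σ b) := by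
    intro a b
    constructor
    · intro h
      rw [← R.2.2] at h
      rw [← R'.2.2]
      exact ⟨fun e => h.1 (σ.injective e), h.2.imp (hσ a b).1 (hσ b a).1⟩
    · intro h
      rw [← R'.2.2] at h
      rw [← R.2.2]
      exact ⟨fun e => h.1 (congrArg σ e), h.2.imp (hσ a b).2 (hσ b a).2⟩
  let hom : (G ⊕g H) →g (G ⊕g H) := ⟨σ, fun {a b} h => (hadj a b).1 h⟩
  have hside : ∀ a b, (G ⊕g H).Reachable a b → (σ a).isLeft = (σ b).isLeft :=
    fun a b h => sum_reachable_isLeft (h.map hom)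
  have hLL : ∀ x x' : V, (σ (inl x)).isLeft = (σ (inl x')).isLeft := fun x x' =>
    hside _ _ ((hG.preconnected x x').map (SimpleGraph.Embedding.sumInl (G := G) (H := H)).toHom)
  have hRR : ∀ w w' : W, (σ (inr w)).isLeft = (σ (inr w')).isLeft := fun w w' =>
    hside _ _ ((hH.preconnected w w').map (SimpleGraph.Embedding.sumInr (G := G) (H := H)).toHom)
  obtain ⟨x₀⟩ := hG.nonempty
  obtain ⟨w₀⟩ := hH.nonempty
  cases hx₀ : σ (inl x₀) with
  | inr u₀ =>
    -- σ maps the left side into the right side; build an iso G ≃g H, contradiction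
    exfalso
    have hl : ∀ x : V, ∃ w, σ (inl x) = inr w := by
      intro x
      have h := hLL x x₀
      rw [hx₀] at h
      cases h' : σ (inl x) with
      | inl v => rw [h'] at h; simp at h
      | inr w => exact ⟨w, rfl⟩
    have finj : Function.Injective (fun x => (hl x).choose) := by
      intro x y h
      have e : σ (inl x) = σ (inl y) := by
        rw [(hl x).choose_spec, (hl y).choose_spec]; exact congrArg inr h
      exact inl_injective (σ.injective e)
    have fsurj : Function.Surjective (fun x => (hl x).choose) := by
      intro w
      cases h' : σ.symm (inr w) with
      | inl x =>
        have e : σ (inl x) = inr w := by rw [← h', σ.apply_symm_apply]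
        exact ⟨x, inr_injective ((hl x).choose_spec.symm.trans e)⟩
      | inr u =>
        exfalso
        have hu : σ (inr u) = inr w := by rw [← h', σ.apply_symm_apply]
        have hrr : ∀ w', (σ (inr w')).isLeft = false := by
          intro w'; rw [hRR w' u, hu]; rfl
        cases h'' : σ.symm (inl x₀) with
        | inl x =>
          have e : σ (inl x) = inl x₀ := by rw [← h'', σ.apply_symm_apply]
          obtain ⟨w', hw'⟩ := hl x
          rw [e] at hw'; exact absurd hw' (by simp)
        | inr u' =>
          have e : σ (inr u') = inl x₀ := by rw [← h'', σ.apply_symm_apply]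
          have h := hrr u'
          rw [e] at h; simp at h
    refine hni ⟨⟨Equiv.ofBijective _ ⟨finj, fsurj⟩, ?_⟩⟩
    intro x y
    have h1 : (G ⊕g H).Adj (inl x) (inl y) ↔
        (G ⊕g H).Adj (inr ((hl x).choose)) (inr ((hl y).choose)) := by
      rw [← (hl x).choose_spec, ← (hl y).choose_spec]; exact hadj _ _
    have h2 := h1.symm
    simp at h2
    exact h2
  | inl v₀ =>
    have hl : ∀ x : V, ∃ v, σ (inl x) = inl v := by
      intro x
      have h := hLL x x₀
      rw [hx₀] at h
      cases h' : σ (inl x) with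
      | inl v => exact ⟨v, rfl⟩
      | inr w => rw [h'] at h; simp at h
    have hll : ∀ x, (σ (inl x)).isLeft = true := by
      intro x; obtain ⟨v, hv⟩ := hl x; rw [hv]; rfl
    have hr : ∀ w : W, ∃ u, σ (inr w) = inr u := by
      intro w
      cases h' : σ (inr w) with
      | inr u => exact ⟨u, rfl⟩
      | inl v =>
        exfalso
        have hrr : ∀ w', (σ (inr w')).isLeft = true := by
          intro w'; rw [hRR w' w, h']; rfl
        cases h'' : σ.symm (inr w₀) with
        | inl x =>
          have e : σ (inl x) = inr w₀ := by rw [← h'', σ.apply_symm_apply]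
          have h := hll x; rw [e] at h; simp at h
        | inr u' =>
          have e : σ (inr u') = inr w₀ := by rw [← h'', σ.apply_symm_apply]
          have h := hrr u'; rw [e] at h; simp at h
    constructor
    · have vinj : Function.Injective (fun x => (hl x).choose) := by
        intro x y h
        have e : σ (inl x) = σ (inl y) := by
          rw [(hl x).choose_spec, (hl y).choose_spec]; exact congrArg inl h
        exact inl_injective (σ.injective e)
      refine ⟨Equiv.ofBijective _ vinj.bijective_of_finite, fun x y => ?_⟩
      refine (hσ (inl x) (inl y)).trans ?_
      simp only [Equiv.ofBijective_apply]
      exact Iff.of_eq (congrArg₂ R'.1 (hl x).choose_spec (hl y).choose_spec)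
    · have winj : Function.Injective (fun w => (hr w).choose) := by
        intro x y h
        have e : σ (inr x) = σ (inr y) := by
          rw [(hr x).choose_spec, (hr y).choose_spec]; exact congrArg inr h
        exact inr_injective (σ.injective e)
      refine ⟨Equiv.ofBijective _ winj.bijective_of_finite, fun x y => ?_⟩
      refine (hσ (inr x) (inr y)).trans ?_
      simp only [Equiv.ofBijective_apply]
      exact Iff.of_eq (congrArg₂ R'.1 (hr x).choose_spec (hr y).choose_spec)


lemma rel_iff [Finite V] [Finite W]
    (hG : G.Connected) (hH : H.Connected) (hni : ¬ Nonempty (G ≃g H))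
    (R R' : {R : V ⊕ W → V ⊕ W → Prop // IsPreorderRel R ∧ underGraph R = G ⊕g H}) :
    (preSetoid (G ⊕g H)).r R R' ↔
      ((preSetoid G).prod (preSetoid H)).r (splitEquiv G H R) (splitEquiv G H R') := by
  constructor
  · rintro ⟨σ, hσ⟩
    obtain ⟨⟨τV, hV⟩, ⟨τW, hW⟩⟩ := rel_forward hG hH hni R R' σ hσ
    exact ⟨⟨τV, hV⟩, ⟨τW, hW⟩⟩
  · rintro ⟨⟨τV, hV⟩, ⟨τW, hW⟩⟩
    refine ⟨Equiv.sumCongr τV τW, fun a b => ?_⟩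
    cases a <;> cases b
    · exact hV _ _
    case inl.inr x y =>
      exact iff_of_false (cross_not R.2.2 x y).1 (cross_not R'.2.2 _ _).1
    case inr.inl y x =>
      exact iff_of_false (cross_not R.2.2 x y).2 (cross_not R'.2.2 _ _).2
    · exact hW _ _

end HbarAux

/-- For connected, non-isomorphic graphs `G` and `H`, `ℏ` is multiplicative over the
disjoint union. -/
theorem hbar_sum_of_not_iso
    {V W : Type*} [Fintype V] [Fintype W]
    (G : SimpleGraph V) (H : SimpleGraph W)
    (hG : G.Connected) (hH : H.Connected)
    (hni : ¬ Nonempty (G ≃g H)) :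
    hbar (G ⊕g H) = hbar G * hbar H := by
  have e : Quotient (preSetoid (G ⊕g H)) ≃
      Quotient (preSetoid G) × Quotient (preSetoid H) :=
    (Quotient.congr (HbarAux.splitEquiv G H)
      (fun a b => HbarAux.rel_iff hG hH hni a b)).trans
      (Setoid.prodQuotientEquiv _ _).symm
  unfold hbar
  rw [Nat.card_congr e, Nat.card_prod]
end

section
/- Let G be a connected simple graph on a finite vertex type V and let n ≥ 1. Let n·G denote the disjoint union of n copies of G, namely the simple graph on Fin n × V in which (i, x) is adjacent to (j, y) iff i = j and x is adjacent to y in G. Then ℏ(n·G) = Nat.choose (ℏ(G) + n - 1) n. -/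
/-- The disjoint union of `n` copies of a graph `G`, on the vertex type `Fin n × V`. -/
def copiesGraph (n : ℕ) {V : Type*} (G : SimpleGraph V) : SimpleGraph (Fin n × V) where
  Adj x y := x.1 = y.1 ∧ G.Adj x.2 y.2
  symm := ⟨fun _ _ h => ⟨h.1.symm, h.2.symm⟩⟩
  loopless := ⟨fun _ h => G.loopless.irrefl _ h.2⟩

section AuxCount

lemma exists_perm_of_map_univ_eq {α : Type*} {n : ℕ} {u v : Fin n → α}
    (h : Multiset.map u Finset.univ.val = Multiset.map v Finset.univ.val) :
    ∃ π : Equiv.Perm (Fin n), ∀ i, u i = v (π i) := by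
  classical
  have hcard : ∀ a, Fintype.card {i // u i = a} = Fintype.card {i // v i = a} := by
    intro a
    have hc := congrArg (Multiset.count a) h
    rw [Multiset.count_map, Multiset.count_map] at hc
    rw [Fintype.card_subtype, Fintype.card_subtype]
    show (Finset.univ.filter fun i => u i = a).val.card =
      (Finset.univ.filter fun i => v i = a).val.card
    rw [Finset.filter_val, Finset.filter_val]
    simpa [eq_comm] using hc
  exact ⟨Equiv.ofFiberEquiv (fun a => Fintype.equivOfCardEq (hcard a)),
    fun i => (Equiv.ofFiberEquiv_map _ i).symm⟩

lemma map_univ_perm {α : Type*} {n : ℕ} (v : Fin n → α) (π : Equiv.Perm (Fin n)) :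
    Multiset.map (fun i => v (π i)) Finset.univ.val = Multiset.map v Finset.univ.val := by
  calc Multiset.map (fun i => v (π i)) Finset.univ.val
      = Multiset.map v (Multiset.map π Finset.univ.val) := by
        rw [Multiset.map_map]; rfl
    _ = Multiset.map v Finset.univ.val := by rw [Multiset.map_univ_val_equiv]

end AuxCount

namespace HbarCopies

variable {V : Type*} {n : ℕ} {G : SimpleGraph V}

lemma adj_iff' {α : Type*} {R : α → α → Prop} {H : SimpleGraph α}
    (hR : underGraph R = H) (p q : α) :
    (p ≠ q ∧ (R p q ∨ R q p)) ↔ H.Adj p q := by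
  have h := SimpleGraph.ext_iff.mp hR
  exact iff_of_eq (congrFun (congrFun h p) q)

lemma fst_eq_of_rel {R : (Fin n × V) → (Fin n × V) → Prop}
    (hR : underGraph R = copiesGraph n G) {p q : Fin n × V} (h : R p q) : p.1 = q.1 := by
  by_cases hpq : p = q
  · rw [hpq]
  · exact ((adj_iff' hR p q).mp ⟨hpq, Or.inl h⟩).1

lemma rel_decomp {R : (Fin n × V) → (Fin n × V) → Prop}
    (hR : underGraph R = copiesGraph n G) (i j : Fin n) (x y : V) :
    R (i, x) (j, y) ↔ i = j ∧ R (i, x) (i, y) := by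
  constructor
  · intro h
    have hij : i = j := fst_eq_of_rel hR h
    subst hij; exact ⟨rfl, h⟩
  · rintro ⟨rfl, h⟩; exact h

/-- Decomposition of a preorder on `Fin n × V` with underlying graph `n·G` into
`n` preorders on `V` with underlying graph `G`. -/
def copyEquiv :
    {R : (Fin n × V) → (Fin n × V) → Prop //
        IsPreorderRel R ∧ underGraph R = copiesGraph n G} ≃
      (Fin n → {R : V → V → Prop // IsPreorderRel R ∧ underGraph R = G}) where
  toFun R i := ⟨fun x y => R.1 (i, x) (i, y),
    ⟨fun x => R.2.1.1 _, fun _ _ _ hxy hyz => R.2.1.2 hxy hyz⟩, by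
    ext x y
    constructor
    · rintro ⟨hne, h⟩
      exact ((adj_iff' R.2.2 (i, x) (i, y)).mp
        ⟨fun hc => hne (congrArg Prod.snd hc), h⟩).2
    · intro h
      obtain ⟨hne, h'⟩ := (adj_iff' R.2.2 (i, x) (i, y)).mpr ⟨rfl, h⟩
      exact ⟨fun hc => hne (by rw [hc]), h'⟩⟩
  invFun f := ⟨fun p q => p.1 = q.1 ∧ (f p.1).1 p.2 q.2,
    ⟨fun p => ⟨rfl, (f p.1).2.1.1 _⟩, by
      rintro ⟨i, x⟩ ⟨j, y⟩ ⟨k, z⟩ ⟨h1, h2⟩ ⟨h3, h4⟩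
      dsimp only at h1 h2 h3 h4 ⊢
      subst h1; subst h3
      exact ⟨rfl, (f i).2.1.2 h2 h4⟩⟩, by
    ext ⟨i, x⟩ ⟨j, y⟩
    show ((i, x) ≠ (j, y) ∧ _) ↔ (i = j ∧ G.Adj x y)
    constructor
    · rintro ⟨hne, (⟨hij, h⟩ | ⟨hij, h⟩)⟩
      · dsimp only at hij h; subst hij
        have hxy : x ≠ y := fun hc => hne (by rw [hc])
        exact ⟨rfl, (adj_iff' (f i).2.2 x y).mp ⟨hxy, Or.inl h⟩⟩
      · dsimp only at hij h; subst hij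
        have hxy : x ≠ y := fun hc => hne (by rw [hc])
        exact ⟨rfl, (adj_iff' (f j).2.2 x y).mp ⟨hxy, Or.inr h⟩⟩
    · rintro ⟨rfl, hadj⟩
      obtain ⟨hxy, h⟩ := (adj_iff' (f i).2.2 x y).mpr hadj
      refine ⟨fun hc => hxy (congrArg Prod.snd hc), ?_⟩
      rcases h with h | h
      · exact Or.inl ⟨rfl, h⟩
      · exact Or.inr ⟨rfl, h⟩⟩
  left_inv R := Subtype.ext (by
    funext p q
    obtain ⟨i, x⟩ := p; obtain ⟨j, y⟩ := q
    exact propext (rel_decomp R.2.2 i j x y).symm)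
  right_inv f := by
    funext i
    apply Subtype.ext
    funext x y
    exact propext (by simp)

lemma copyEquiv_apply
    (R : {R : (Fin n × V) → (Fin n × V) → Prop //
        IsPreorderRel R ∧ underGraph R = copiesGraph n G}) (i : Fin n) (x y : V) :
    (copyEquiv R i).1 x y ↔ R.1 (i, x) (i, y) := Iff.rfl

lemma reach_iff (hG : G.Connected) (p q : Fin n × V) :
    (copiesGraph n G).Reachable p q ↔ p.1 = q.1 := by
  constructor
  · rintro ⟨w⟩
    induction w with
    | nil => rfl
    | cons h _ ih => exact h.1.trans ih
  · intro h
    obtain ⟨i, x⟩ := p; obtain ⟨j, y⟩ := q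
    dsimp only at h; subst h
    have hr : G.Reachable x y := hG.preconnected x y
    exact hr.map (⟨fun z => (i, z), fun {a b} hadj => ⟨rfl, hadj⟩⟩ : G →g copiesGraph n G)

lemma setoid_iff (hG : G.Connected)
    (R R' : {R : (Fin n × V) → (Fin n × V) → Prop //
        IsPreorderRel R ∧ underGraph R = copiesGraph n G}) :
    (preSetoid (copiesGraph n G)).r R R' ↔
      ∃ π : Equiv.Perm (Fin n),
        ∀ i, (preSetoid G).r (copyEquiv R i) (copyEquiv R' (π i)) := by
  constructor
  · rintro ⟨σ, hσ⟩
    have hadj : ∀ p q, (copiesGraph n G).Adj (σ p) (σ q) ↔ (copiesGraph n G).Adj p q := by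
      intro p q
      rw [← adj_iff' R'.2.2 (σ p) (σ q), ← adj_iff' R.2.2 p q]
      exact and_congr (not_congr σ.apply_eq_iff_eq)
        (or_congr (hσ p q).symm (hσ q p).symm)
    let iso : copiesGraph n G ≃g copiesGraph n G := ⟨σ, fun {p q} => hadj p q⟩
    have hreach : ∀ p q : Fin n × V, (σ p).1 = (σ q).1 ↔ p.1 = q.1 := by
      intro p q
      rw [← reach_iff hG p q, ← reach_iff hG (σ p) (σ q)]
      exact SimpleGraph.Iso.reachable_iff (φ := iso) (u := p) (v := q)
    haveI : Nonempty V := hG.nonempty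
    set x₀ : V := Classical.arbitrary V with hx₀
    set π₀ : Fin n → Fin n := fun i => (σ (i, x₀)).1 with hπ₀def
    have hπ₀ : ∀ (i : Fin n) (x : V), (σ (i, x)).1 = π₀ i :=
      fun i x => (hreach (i, x) (i, x₀)).mpr rfl
    have hπinj : Function.Injective π₀ := by
      intro i i' h
      exact (hreach (i, x₀) (i', x₀)).mp h
    set π : Equiv.Perm (Fin n) :=
      Equiv.ofBijective π₀ (Finite.injective_iff_bijective.mp hπinj) with hπdef
    have hπ : ∀ i, π i = π₀ i := fun i => rfl
    refine ⟨π, fun i => ?_⟩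
    have hsig : ∀ x : V, σ (i, x) = (π₀ i, (σ (i, x)).2) :=
      fun x => Prod.ext (hπ₀ i x) rfl
    have sinj : Function.Injective (fun x : V => (σ (i, x)).2) := by
      intro x x' h
      have : σ (i, x) = σ (i, x') := by
        rw [hsig x, hsig x']
        exact Prod.ext rfl h
      have := σ.injective this
      exact congrArg Prod.snd this
    have ssurj : Function.Surjective (fun x : V => (σ (i, x)).2) := by
      intro y
      set q := σ.symm (π₀ i, y) with hq
      have h1 : (σ q).1 = (σ (i, x₀)).1 := by
        rw [Equiv.apply_symm_apply]
      have hq1 : q.1 = i := (hreach q (i, x₀)).mp h1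
      refine ⟨q.2, ?_⟩
      have : ((i : Fin n), q.2) = q := Prod.ext hq1.symm rfl
      show (σ (i, q.2)).2 = y
      rw [this, Equiv.apply_symm_apply]
    refine ⟨Equiv.ofBijective _ ⟨sinj, ssurj⟩, fun x y => ?_⟩
    rw [copyEquiv_apply, copyEquiv_apply]
    show R.1 (i, x) (i, y) ↔ R'.1 (π i, (σ (i, x)).2) (π i, (σ (i, y)).2)
    rw [hπ i]
    exact (hσ (i, x) (i, y)).trans (iff_of_eq (by rw [← hsig x, ← hsig y]))
  · rintro ⟨π, hπ⟩
    choose σs hσs using hπ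
    refine ⟨⟨fun p => (π p.1, σs p.1 p.2),
      fun q => (π.symm q.1, (σs (π.symm q.1)).symm q.2),
      by rintro ⟨i, x⟩; simp, by rintro ⟨j, y⟩; simp⟩, ?_⟩
    rintro ⟨i, x⟩ ⟨j, y⟩
    show R.1 (i, x) (j, y) ↔ R'.1 (π i, σs i x) (π j, σs j y)
    rw [rel_decomp R.2.2, rel_decomp R'.2.2]
    constructor
    · rintro ⟨rfl, h⟩
      refine ⟨rfl, ?_⟩
      have := (hσs i x y).mp ((copyEquiv_apply R i x y).mpr h)
      exact (copyEquiv_apply R' (π i) (σs i x) (σs i y)).mp this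
    · rintro ⟨hpij, h⟩
      have hij : i = j := π.injective hpij
      subst hij
      refine ⟨rfl, ?_⟩
      have := (hσs i x y).mpr ((copyEquiv_apply R' (π i) (σs i x) (σs i y)).mpr h)
      exact (copyEquiv_apply R i x y).mp this

end HbarCopies

/-- For a connected graph `G` and `n ≥ 1`,
`ℏ(n·G) = C(ℏ(G) + n - 1, n)`. -/
theorem hbar_copies
    {V : Type*} [Fintype V] (G : SimpleGraph V) (hG : G.Connected)
    (n : ℕ) (hn : 1 ≤ n) :
    hbar (copiesGraph n G) = Nat.choose (hbar G + n - 1) n := by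
  classical
  set Q := Quotient (preSetoid G) with hQ
  haveI : Finite {R : V → V → Prop // IsPreorderRel R ∧ underGraph R = G} :=
    Subtype.finite
  haveI : Finite Q := Quotient.finite _
  haveI : Fintype Q := Fintype.ofFinite Q
  set Φ : (Fin n → {R : V → V → Prop // IsPreorderRel R ∧ underGraph R = G}) → Sym Q n :=
    fun f => ⟨Multiset.map (fun i => (⟦f i⟧ : Q)) Finset.univ.val, by
      rw [Multiset.card_map]
      exact Finset.card_fin n⟩ with hΦ
  have key : ∀ (R R' : {R : (Fin n × V) → (Fin n × V) → Prop //
        IsPreorderRel R ∧ underGraph R = copiesGraph n G}),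
      (preSetoid (copiesGraph n G)).r R R' ↔
        Φ (HbarCopies.copyEquiv R) = Φ (HbarCopies.copyEquiv R') := by
    intro R R'
    rw [HbarCopies.setoid_iff hG]
    constructor
    · rintro ⟨π, h⟩
      apply Subtype.ext
      exact (Multiset.map_congr rfl (fun i _ => Quotient.sound (h i))).trans
        (map_univ_perm (fun i => (⟦HbarCopies.copyEquiv R' i⟧ : Q)) π)
    · intro h
      have h' := congrArg Subtype.val h
      obtain ⟨π, hπ⟩ := exists_perm_of_map_univ_eq h'
      exact ⟨π, fun i => Quotient.exact (hπ i)⟩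
  have hsurjΦ : Function.Surjective Φ := by
    rintro ⟨m, hm⟩
    have hlen : m.toList.length = n := by rw [Multiset.length_toList, hm]
    set u : Fin n → Q := fun i => m.toList.get (Fin.cast hlen.symm i) with hu
    refine ⟨fun i => Quotient.out (u i), ?_⟩
    apply Subtype.ext
    have h1 : (fun i => (⟦Quotient.out (u i)⟧ : Q)) = u := by
      funext i; exact Quotient.out_eq _
    have h2 : List.ofFn u = m.toList := by
      apply List.ext_getElem
      · simp [hlen]
      · intro k hk1 hk2
        simp [hu]
    have : Multiset.map (fun i => (⟦Quotient.out (u i)⟧ : Q)) Finset.univ.val = m := by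
      rw [h1, Fin.univ_val_map, h2]
      exact Multiset.coe_toList m
    exact this
  set F : Quotient (preSetoid (copiesGraph n G)) → Sym Q n :=
    Quotient.lift (fun R => Φ (HbarCopies.copyEquiv R))
      (fun R R' h => (key R R').mp h) with hF
  have hFbij : Function.Bijective F := by
    constructor
    · intro a b
      refine Quotient.inductionOn₂ a b fun R R' h => ?_
      exact Quotient.sound ((key R R').mpr h)
    · intro s
      obtain ⟨f, hf⟩ := hsurjΦ s
      refine ⟨⟦HbarCopies.copyEquiv.symm f⟧, ?_⟩
      show Φ (HbarCopies.copyEquiv (HbarCopies.copyEquiv.symm f)) = s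
      rw [Equiv.apply_symm_apply]
      exact hf
  have hcongr : hbar (copiesGraph n G) = Nat.card (Sym Q n) :=
    Nat.card_congr (Equiv.ofBijective F hFbij)
  haveI : Finite (Sym Q n) := by
    have e1 : Sym Q n ≃ Sym.Sym' Q n := Sym.symEquivSym'
    have : Finite (List.Vector Q n) := by
      exact Finite.of_equiv _ (Equiv.vectorEquivFin Q n).symm
    have : Finite (Sym.Sym' Q n) := Quotient.finite _
    exact Finite.of_equiv _ e1.symm
  haveI : Fintype (Sym Q n) := Fintype.ofFinite _
  rw [hcongr, Nat.card_eq_fintype_card, Sym.card_sym_eq_choose]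
  have : Fintype.card Q = hbar G := by
    rw [hbar, Nat.card_eq_fintype_card]
  rw [this]
end

section
/- For every odd natural number n ≥ 3, there is no preorder relation on Fin 2 × Fin n whose underlying graph equals the box product K₂ □ Cₙ of the complete graph on Fin 2 with the cycle graph on Fin n; that is, τ(K₂ □ Cₙ) = 0. -/
/-- For odd `n ≥ 3`, no preorder relation has underlying graph `K₂ □ Cₙ`. -/
theorem tau_K2_boxProd_cycle_odd
    (n : ℕ) (h3 : 3 ≤ n) (hodd : Odd n) :
    tau ((⊤ : SimpleGraph (Fin 2)) □ SimpleGraph.cycleGraph n) = 0 := by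
  obtain ⟨m, rfl⟩ : ∃ m, n = m + 3 := ⟨n - 3, by omega⟩
  have hn : m + 3 = m + 1 + 2 := rfl
  set n := m + 3 with hndef
  rw [tau, Nat.card_eq_zero]
  left
  constructor
  rintro ⟨R, ⟨hrefl, htrans⟩, hG⟩
  set G := (⊤ : SimpleGraph (Fin 2)) □ SimpleGraph.cycleGraph n with hGdef
  -- adjacency of G characterized by R
  have hadj : ∀ x y : Fin 2 × Fin n, G.Adj x y ↔ (x ≠ y ∧ (R x y ∨ R y x)) := by
    intro x y; rw [← hG]; rfl
  -- vertices
  set a : Fin n → Fin 2 × Fin n := fun k => ((0 : Fin 2), k) with ha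
  set b : Fin n → Fin 2 × Fin n := fun k => ((1 : Fin 2), k) with hb
  have h01 : (0 : Fin 2) ≠ 1 := by decide
  have hk1 : ∀ k : Fin n, k ≠ k + 1 := by
    intro k h
    have : (0 : Fin n) = 1 := by
      have := congrArg (· - k) h
      simpa [sub_eq_iff_eq_add] using this
    simp [Fin.ext_iff] at this
  have hcyc : ∀ k : Fin n, (SimpleGraph.cycleGraph n).Adj k (k + 1) := by
    intro k
    rw [show SimpleGraph.cycleGraph n = SimpleGraph.cycleGraph (m + 1 + 2) from rfl,
      SimpleGraph.cycleGraph_adj]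
    right; simp
  -- adjacency facts
  have hab : ∀ k : Fin n, G.Adj (a k) (b k) := by
    intro k
    rw [hGdef, SimpleGraph.boxProd_adj]
    exact Or.inl ⟨by simp [ha, hb, SimpleGraph.top_adj, h01], rfl⟩
  have haa : ∀ k : Fin n, G.Adj (a k) (a (k + 1)) := by
    intro k
    rw [hGdef, SimpleGraph.boxProd_adj]
    exact Or.inr ⟨hcyc k, rfl⟩
  have hbb : ∀ k : Fin n, G.Adj (b k) (b (k + 1)) := by
    intro k
    rw [hGdef, SimpleGraph.boxProd_adj]
    exact Or.inr ⟨hcyc k, rfl⟩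
  -- non-adjacency of the cross pairs
  have hcross : ∀ (i j : Fin 2) (k l : Fin n), i ≠ j → k ≠ l → ¬ G.Adj (i, k) (j, l) := by
    intro i j k l hij hkl h
    rw [hGdef, SimpleGraph.boxProd_adj] at h
    rcases h with ⟨_, h⟩ | ⟨_, h⟩
    · exact hkl h
    · exact hij h
  have hne : ∀ (i j : Fin 2) (k l : Fin n), i ≠ j → ((i, k) : Fin 2 × Fin n) ≠ (j, l) := by
    intro i j k l hij h
    exact hij (congrArg Prod.fst h)
  -- no R-path through two vertices that are distinct and non-adjacent
  have no2 : ∀ x y z : Fin 2 × Fin n, ¬ G.Adj x z → x ≠ z → R x y → R y z → False := by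
    intro x y z hnadj hxz h1 h2
    exact hnadj ((hadj x z).mpr ⟨hxz, Or.inl (htrans h1 h2)⟩)
  -- every adjacent pair is R-related in some direction
  have hedge : ∀ x y : Fin 2 × Fin n, G.Adj x y → R x y ∨ R y x := by
    intro x y h
    exact ((hadj x y).mp h).2
  -- rung orientation is strict: not both directions
  have hstrict : ∀ k : Fin n, ¬ (R (a k) (b k) ∧ R (b k) (a k)) := by
    intro k ⟨h1, h2⟩
    -- witness c = b (k+1): adjacent to b k, non-adjacent to a k
    have hnadj : ¬ G.Adj (a k) (b (k + 1)) := hcross 0 1 k (k + 1) h01 (hk1 k)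
    have hnadj' : ¬ G.Adj (b (k + 1)) (a k) := fun h => hnadj h.symm
    have hne1 : a k ≠ b (k + 1) := hne 0 1 k (k + 1) h01
    rcases hedge _ _ (hbb k) with h3 | h3
    · exact no2 (a k) (b k) (b (k + 1)) hnadj hne1 h1 h3
    · exact no2 (b (k + 1)) (b k) (a k) hnadj' (Ne.symm hne1) h3 h2
  -- alternation of rung orientation
  have halt : ∀ (c d : Fin n → Fin 2 × Fin n), (∀ k, G.Adj (c k) (d k)) →
      (∀ k, G.Adj (c k) (c (k + 1))) → (∀ k, G.Adj (d k) (d (k + 1))) →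
      (∀ k, ¬ G.Adj (c k) (d (k + 1))) → (∀ k, c k ≠ d (k + 1)) →
      (∀ k, ¬ G.Adj (d k) (c (k + 1))) → (∀ k, d k ≠ c (k + 1)) →
      ∀ k, R (c k) (d k) → R (d (k + 1)) (c (k + 1)) := by
    intro c d hcd hcc hdd hncd hnecd hndc hnedc k h1
    -- step 1: R (d (k+1)) (d k)
    have s1 : R (d (k + 1)) (d k) := by
      rcases hedge _ _ (hdd k) with h | h
      · exact (no2 (c k) (d k) (d (k + 1)) (hncd k) (hnecd k) h1 h).elim
      · exact h
    -- step 2: R (c k) (c (k+1))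
    have s2 : R (c k) (c (k + 1)) := by
      rcases hedge _ _ (hcc k) with h | h
      · exact h
      · exact (no2 (c (k + 1)) (c k) (d k)
          (fun hh => hndc k hh.symm) (Ne.symm (hnedc k)) h h1).elim
    -- step 3: R (d (k+1)) (c (k+1))
    rcases hedge _ _ (hcd (k + 1)) with h | h
    · exact (no2 (c k) (c (k + 1)) (d (k + 1)) (hncd k) (hnecd k) s2 h).elim
    · exact h
  have halt1 : ∀ k : Fin n, R (a k) (b k) → R (b (k + 1)) (a (k + 1)) :=
    halt a b hab haa hbb
      (fun k => hcross 0 1 k (k + 1) h01 (hk1 k))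
      (fun k => hne 0 1 k (k + 1) h01)
      (fun k => hcross 1 0 k (k + 1) h01.symm (hk1 k))
      (fun k => hne 1 0 k (k + 1) h01.symm)
  have halt2 : ∀ k : Fin n, R (b k) (a k) → R (a (k + 1)) (b (k + 1)) :=
    halt b a (fun k => (hab k).symm) hbb haa
      (fun k => hcross 1 0 k (k + 1) h01.symm (hk1 k))
      (fun k => hne 1 0 k (k + 1) h01.symm)
      (fun k => hcross 0 1 k (k + 1) h01 (hk1 k))
      (fun k => hne 0 1 k (k + 1) h01)
  -- the flip property
  set S : Fin n → Prop := fun k => R (a k) (b k) with hS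
  have hflip : ∀ k : Fin n, S (k + 1) ↔ ¬ S k := by
    intro k
    constructor
    · intro h1 h0
      exact hstrict (k + 1) ⟨h1, halt1 k h0⟩
    · intro h0
      rcases hedge _ _ (hab k) with h | h
      · exact absurd h h0
      · exact halt2 k h
  -- lift to ℕ and derive contradiction from oddness
  haveI : NeZero n := ⟨by omega⟩
  open Fin.CommRing in
  set T : ℕ → Prop := fun j => S ((j : ℕ) : Fin n) with hT
  open Fin.CommRing in
  have hTflip : ∀ j : ℕ, T (j + 1) ↔ ¬ T j := by
    intro j
    have : ((j + 1 : ℕ) : Fin n) = ((j : ℕ) : Fin n) + 1 := by push_cast; ring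
    simpa [hT, this] using hflip ((j : ℕ) : Fin n)
  have key : ∀ j : ℕ, (Even j → (T j ↔ T 0)) ∧ (Odd j → (T j ↔ ¬ T 0)) := by
    intro j
    induction j with
    | zero => exact ⟨fun _ => Iff.rfl, fun h => absurd h (by simp)⟩
    | succ j ih =>
      constructor
      · intro h
        have hodd' : Odd j := Nat.Even.sub_odd (by omega) h odd_one
        rw [hTflip j, ih.2 hodd']
        tauto
      · intro h
        have heven : Even j := by
          obtain ⟨t, ht⟩ := h
          exact ⟨t, by omega⟩
        rw [hTflip j, ih.1 heven]
  have hTn : T n ↔ ¬ T 0 := (key n).2 hodd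
  open Fin.CommRing in
  have hcast : ((n : ℕ) : Fin n) = ((0 : ℕ) : Fin n) := by
    simp [hndef]
  have hTT : T n = T 0 := by
    show S _ = S _
    rw [hcast]
  rw [hTT] at hTn
  exact (iff_not_self hTn).elim
end

section
/- Let G be a connected simple graph on a finite vertex type V with at least 2 vertices and H a connected simple graph on a finite vertex type W with at least 2 vertices. If G is not bipartite (not 2-colorable) or H is not bipartite, then τ(G □ H) = 0. -/
private lemma exists_adj_aux {X : Type*} [Fintype X] (K : SimpleGraph X)
    (hK : K.Connected) (hX : 2 ≤ Fintype.card X) : ∃ a b, K.Adj a b := by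
  have : Nontrivial X := Fintype.one_lt_card_iff_nontrivial.mp hX
  obtain ⟨a, b, hab⟩ := exists_pair_ne X
  obtain ⟨p⟩ := hK.preconnected a b
  cases p with
  | nil => exact absurd rfl hab
  | cons h q => exact ⟨_, _, h⟩

/-- If `G` or `H` is not bipartite (both connected, each with at least 2 vertices),
then `τ(G □ H) = 0`. -/
theorem tau_boxProd_of_not_bipartite
    {V W : Type*} [Fintype V] [Fintype W]
    (G : SimpleGraph V) (H : SimpleGraph W)
    (hG : G.Connected) (hH : H.Connected)
    (hV : 2 ≤ Fintype.card V) (hW : 2 ≤ Fintype.card W)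
    (h : ¬ G.Colorable 2 ∨ ¬ H.Colorable 2) :
    tau (G □ H) = 0 := by
  classical
  rw [tau]
  rw [Nat.card_eq_zero]
  left
  constructor
  rintro ⟨R, ⟨hrefl, htrans⟩, hug⟩
  -- adjacency translation
  have hadj : ∀ x y : V × W, (x ≠ y ∧ (R x y ∨ R y x)) ↔ (G □ H).Adj x y := by
    intro x y
    rw [← hug]
    rfl
  have hR_or : ∀ x y, (G □ H).Adj x y → R x y ∨ R y x :=
    fun x y ha => ((hadj x y).mpr ha).2
  -- diagonal non-relation
  have nonadj : ∀ (u u' : V) (w w' : W), u ≠ u' → w ≠ w' → ¬ R (u, w) (u', w') := by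
    intro u u' w w' hu hw hr
    have hne : (u, w) ≠ (u', w') := fun h => hu (congrArg Prod.fst h)
    have : (G □ H).Adj (u, w) (u', w') := (hadj _ _).mp ⟨hne, Or.inl hr⟩
    rw [SimpleGraph.boxProd_adj] at this
    rcases this with ⟨_, h'⟩ | ⟨_, h'⟩
    · exact hw h'
    · exact hu h'
  -- key lemma 1: G-layer edges flip along H-edges
  have key1 : ∀ (u u' : V) (w w' : W), G.Adj u u' → H.Adj w w' →
      R (u, w) (u', w) → ¬ R (u, w') (u', w') := by
    intro u u' w w' hGuu hHww h1 h2
    have hu : u ≠ u' := hGuu.ne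
    have hw : w ≠ w' := hHww.ne
    have hedge : (G □ H).Adj (u', w) (u', w') := by
      rw [SimpleGraph.boxProd_adj]; right; exact ⟨hHww, rfl⟩
    rcases hR_or _ _ hedge with h3 | h3
    · exact nonadj u u' w w' hu hw (htrans h1 h3)
    · exact nonadj u u' w' w hu (Ne.symm hw) (htrans h2 h3)
  -- key lemma 2: H-layer edges flip along G-edges
  have key2 : ∀ (u u' : V) (w w' : W), G.Adj u u' → H.Adj w w' →
      R (u, w) (u, w') → ¬ R (u', w) (u', w') := by
    intro u u' w w' hGuu hHww h1 h2
    have hu : u ≠ u' := hGuu.ne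
    have hw : w ≠ w' := hHww.ne
    have hedge : (G □ H).Adj (u, w') (u', w') := by
      rw [SimpleGraph.boxProd_adj]; left; exact ⟨hGuu, rfl⟩
    rcases hR_or _ _ hedge with h3 | h3
    · exact nonadj u u' w w' hu hw (htrans h1 h3)
    · exact nonadj u' u w w' (Ne.symm hu) hw (htrans h2 h3)
  rcases h with hGc | hHc
  · -- G is not 2-colorable; use an H-edge to 2-color G
    obtain ⟨w, w', hww⟩ := exists_adj_aux H hH hW
    have proper : ∀ {u u' : V}, G.Adj u u' →
        R (u, w) (u, w') ≠ R (u', w) (u', w') := by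
      intro u u' huu heq
      have hiff : R (u, w) (u, w') ↔ R (u', w) (u', w') := by rw [heq]
      by_cases hc : R (u, w) (u, w')
      · exact key2 u u' w w' huu hww hc (hiff.mp hc)
      · have hc' : ¬ R (u', w) (u', w') := fun h' => hc (hiff.mpr h')
        have hedge : (G □ H).Adj (u, w) (u, w') := by
          rw [SimpleGraph.boxProd_adj]; right; exact ⟨hww, rfl⟩
        have hedge' : (G □ H).Adj (u', w) (u', w') := by
          rw [SimpleGraph.boxProd_adj]; right; exact ⟨hww, rfl⟩
        have h1 : R (u, w') (u, w) := (hR_or _ _ hedge).resolve_left hc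
        have h2 : R (u', w') (u', w) := (hR_or _ _ hedge').resolve_left hc'
        exact key2 u u' w' w huu hww.symm h1 h2
    have C : G.Coloring Prop :=
      SimpleGraph.Coloring.mk (fun u => R (u, w) (u, w')) (fun huu => proper huu)
    have := C.colorable
    rw [Fintype.card_prop] at this
    exact hGc this
  · -- H is not 2-colorable; use a G-edge to 2-color H
    obtain ⟨u, u', huu⟩ := exists_adj_aux G hG hV
    have proper : ∀ {w w' : W}, H.Adj w w' →
        R (u, w) (u', w) ≠ R (u, w') (u', w') := by
      intro w w' hww heq
      have hiff : R (u, w) (u', w) ↔ R (u, w') (u', w') := by rw [heq]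
      by_cases hc : R (u, w) (u', w)
      · exact key1 u u' w w' huu hww hc (hiff.mp hc)
      · have hc' : ¬ R (u, w') (u', w') := fun h' => hc (hiff.mpr h')
        have hedge : (G □ H).Adj (u, w) (u', w) := by
          rw [SimpleGraph.boxProd_adj]; left; exact ⟨huu, rfl⟩
        have hedge' : (G □ H).Adj (u, w') (u', w') := by
          rw [SimpleGraph.boxProd_adj]; left; exact ⟨huu, rfl⟩
        have h1 : R (u', w) (u, w) := (hR_or _ _ hedge).resolve_left hc
        have h2 : R (u', w') (u, w') := (hR_or _ _ hedge').resolve_left hc'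
        exact key1 u' u w w' huu.symm hww h1 h2
    have C : H.Coloring Prop :=
      SimpleGraph.Coloring.mk (fun w => R (u, w) (u', w)) (fun hww => proper hww)
    have := C.colorable
    rw [Fintype.card_prop] at this
    exact hHc this
end

section
/- Let G be a connected simple graph on a finite vertex type V with at least 2 vertices and H a connected simple graph on a finite vertex type W with at least 2 vertices. If both G and H are bipartite (2-colorable), then τ(G □ H) = 2. -/
open SimpleGraph

private lemma fin2_flip : ∀ a b : Fin 2, a ≠ b → (a = 0 ↔ ¬ b = 0) := by decide

private lemma fin2_cover : ∀ a b d : Fin 2, a ≠ b → d = a ∨ d = b := by decide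

private lemma fin2_three : ∀ a b d : Fin 2, a ≠ b → b ≠ d → a ≠ d → False := by decide

private lemma fin2_ne_zero : ∀ a : Fin 2, ¬ a = 0 ↔ a = 1 := by decide

private lemma exists_adj_of_connected {W : Type*} [Fintype W] {H : SimpleGraph W}
    (hH : H.Connected) (hW : 2 ≤ Fintype.card W) (w : W) : ∃ w', H.Adj w w' := by
  obtain ⟨v, hv⟩ := Fintype.exists_ne_of_one_lt_card (by omega) w
  obtain ⟨p⟩ := hH.preconnected w v
  cases p with
  | nil => exact absurd rfl hv
  | cons h _ => exact ⟨_, h⟩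

set_option maxHeartbeats 1000000 in
/-- If both `G` and `H` are bipartite (both connected, each with at least 2 vertices),
then `τ(G □ H) = 2`. -/
theorem tau_boxProd_of_bipartite
    {V W : Type*} [Fintype V] [Fintype W]
    (G : SimpleGraph V) (H : SimpleGraph W)
    (hG : G.Connected) (hH : H.Connected)
    (hV : 2 ≤ Fintype.card V) (hW : 2 ≤ Fintype.card W)
    (hGb : G.Colorable 2) (hHb : H.Colorable 2) :
    tau (G □ H) = 2 := by
  classical
  set K := G □ H with hKdef
  obtain ⟨cG⟩ := hGb
  obtain ⟨cH⟩ := hHb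
  -- a proper 2-coloring of the box product
  let c : K.Coloring (Fin 2) := Coloring.mk (fun p => cG p.1 + cH p.2) (by
    intro a b hab
    rcases boxProd_adj.mp hab with ⟨hg, he⟩ | ⟨hh, he⟩
    · simp only [he]
      intro h
      exact cG.valid hg (add_right_cancel h)
    · simp only [he]
      intro h
      exact cH.valid hh (add_left_cancel h))
  -- triangle-freeness
  have hTri : ∀ x y z : V × W, K.Adj x y → K.Adj y z → K.Adj x z → False := by
    intro x y z h1 h2 h3
    exact fin2_three (c x) (c y) (c z) (c.valid h1) (c.valid h2) (c.valid h3)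
  -- for every edge, a witness vertex adjacent to the first endpoint but not the second
  have hwit : ∀ x y : V × W, K.Adj x y → ∃ z, K.Adj x z ∧ ¬ K.Adj z y ∧ z ≠ y := by
    intro x y h
    rcases boxProd_adj.mp h with ⟨hg, he⟩ | ⟨hh, he⟩
    · obtain ⟨w', hw'⟩ := exists_adj_of_connected hH hW x.2
      refine ⟨(x.1, w'), boxProd_adj.mpr (Or.inr ⟨hw', rfl⟩), ?_, ?_⟩
      · intro hc
        rcases boxProd_adj.mp hc with ⟨_, he2⟩ | ⟨_, he2⟩
        · have hww : w' = x.2 := (he2 : w' = y.2).trans he.symm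
          exact H.irrefl (hww ▸ hw')
        · exact hg.ne he2
      · intro hc
        apply hg.ne
        rw [← hc]
    · obtain ⟨g', hg'⟩ := exists_adj_of_connected hG hV x.1
      refine ⟨(g', x.2), boxProd_adj.mpr (Or.inl ⟨hg', rfl⟩), ?_, ?_⟩
      · intro hc
        rcases boxProd_adj.mp hc with ⟨_, he2⟩ | ⟨_, he2⟩
        · exact hh.ne he2
        · have hgg : g' = x.1 := (he2 : g' = y.1).trans he.symm
          exact G.irrefl (hgg ▸ hg')
      · intro hc
        apply hh.ne
        rw [← hc]
  have hKconn : K.Connected := connected_boxProd.mpr ⟨hG, hH⟩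
  -- an edge of K
  have hedge : ∃ x y : V × W, K.Adj x y := by
    have : Nonempty V := Fintype.card_pos_iff.mp (by omega)
    have : Nonempty W := Fintype.card_pos_iff.mp (by omega)
    obtain ⟨v⟩ := ‹Nonempty V›
    obtain ⟨w⟩ := ‹Nonempty W›
    obtain ⟨v', hv'⟩ := exists_adj_of_connected hG hV v
    exact ⟨(v, w), (v', w), boxProd_adj.mpr (Or.inl ⟨hv', rfl⟩)⟩
  -- the two candidate preorders
  let Rb : Fin 2 → ((V × W) → (V × W) → Prop) :=
    fun b x y => x = y ∨ (K.Adj x y ∧ c x = b)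
  have hRbPre : ∀ b, IsPreorderRel (Rb b) := by
    intro b
    refine ⟨fun x => Or.inl rfl, ?_⟩
    intro x y z hxy hyz
    rcases hxy with rfl | ⟨h1, hc1⟩
    · exact hyz
    rcases hyz with rfl | ⟨h2, hc2⟩
    · exact Or.inr ⟨h1, hc1⟩
    · exact absurd (hc1.trans hc2.symm) (c.valid h1)
  have hRbGraph : ∀ b, underGraph (Rb b) = K := by
    intro b
    refine SimpleGraph.ext ?_
    funext x y
    apply propext
    constructor
    · rintro ⟨hne, (rfl | ⟨h, _⟩) | (rfl | ⟨h, _⟩)⟩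
      · exact absurd rfl hne
      · exact h
      · exact absurd rfl hne
      · exact h.symm
    · intro h
      refine ⟨h.ne, ?_⟩
      rcases fin2_cover (c x) (c y) b (c.valid h) with hb | hb
      · exact Or.inl (Or.inr ⟨h, hb.symm⟩)
      · exact Or.inr (Or.inr ⟨h.symm, hb.symm⟩)
  have hne01 : Rb 0 ≠ Rb 1 := by
    obtain ⟨x, y, hxy⟩ := hedge
    intro h
    rcases fin2_cover 0 1 (c x) (by decide) with hc0 | hc1
    · have h0 : Rb 0 x y := Or.inr ⟨hxy, hc0⟩
      rw [h] at h0
      rcases h0 with rfl | ⟨_, hc⟩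
      · exact K.irrefl hxy
      · exact absurd (hc0.symm.trans hc) (by decide)
    · have h1 : Rb 1 x y := Or.inr ⟨hxy, hc1⟩
      rw [← h] at h1
      rcases h1 with rfl | ⟨_, hc⟩
      · exact K.irrefl hxy
      · exact absurd (hc1.symm.trans hc) (by decide)
  -- uniqueness
  have hUniq : ∀ R, IsPreorderRel R → underGraph R = K → R = Rb 0 ∨ R = Rb 1 := by
    rintro R ⟨hrefl, htrans⟩ hRG
    have hadj : ∀ x y, K.Adj x y ↔ (x ≠ y ∧ (R x y ∨ R y x)) := by
      intro x y
      rw [← hRG]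
      exact Iff.rfl
    -- no 2-cycles
    have hA : ∀ x y, R x y → R y x → x = y := by
      intro x y hxy hyx
      by_contra hne
      have hKxy : K.Adj x y := (hadj x y).mpr ⟨hne, Or.inl hxy⟩
      obtain ⟨z, hxz, hnzy, hzy⟩ := hwit x y hKxy
      rcases ((hadj x z).mp hxz).2 with h | h
      · exact hnzy (((hadj y z).mpr ⟨Ne.symm hzy, Or.inl (htrans hyx h)⟩).symm)
      · exact hnzy ((hadj z y).mpr ⟨hzy, Or.inl (htrans h hxy)⟩)
    -- no directed 2-paths
    have hB : ∀ x y z, R x y → R y z → x = y ∨ y = z := by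
      intro x y z h1 h2
      by_contra hc
      push_neg at hc
      obtain ⟨hne1, hne2⟩ := hc
      have k1 : K.Adj x y := (hadj _ _).mpr ⟨hne1, Or.inl h1⟩
      have k2 : K.Adj y z := (hadj _ _).mpr ⟨hne2, Or.inl h2⟩
      by_cases hxez : x = z
      · exact hne1 (hA x y h1 (hxez ▸ h2))
      · exact hTri x y z k1 k2 ((hadj _ _).mpr ⟨hxez, Or.inl (htrans h1 h2)⟩)
    -- sources
    let s : V × W → Prop := fun v => ∃ u, u ≠ v ∧ R v u
    have hC : ∀ x y, s x → R y x → y = x := by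
      rintro x y ⟨u, hu, hxu⟩ hyx
      rcases hB y x u hyx hxu with h | h
      · exact h
      · exact absurd h.symm hu
    have hD : ∀ x y, K.Adj x y → (s x ↔ ¬ s y) := by
      intro x y hxy
      constructor
      · intro hsx hsy
        rcases ((hadj x y).mp hxy).2 with h | h
        · exact hxy.ne' (hC y x hsy h).symm
        · exact hxy.ne' (hC x y hsx h)
      · intro hnsy
        rcases ((hadj x y).mp hxy).2 with h | h
        · exact ⟨y, hxy.ne', h⟩
        · exact absurd ⟨x, hxy.ne, h⟩ hnsy
    have hcflip : ∀ x y, K.Adj x y → (c x = 0 ↔ ¬ c y = 0) :=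
      fun x y h => fin2_flip _ _ (c.valid h)
    have hE : ∀ (x y : V × W), K.Walk x y → ((s x ↔ c x = 0) ↔ (s y ↔ c y = 0)) := by
      intro x y p
      induction p with
      | nil => exact Iff.rfl
      | cons h p ih =>
        have d := hD _ _ h
        have f := hcflip _ _ h
        rw [← ih, d, f]
        exact not_iff_not
    have hNe : Nonempty V := Fintype.card_pos_iff.mp (by omega)
    have hNeW : Nonempty W := Fintype.card_pos_iff.mp (by omega)
    obtain ⟨x₀⟩ : Nonempty (V × W) := inferInstance
    have hEall : ∀ x, ((s x₀ ↔ c x₀ = 0) ↔ (s x ↔ c x = 0)) :=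
      fun x => hE x₀ x (hKconn.preconnected x₀ x).some
    by_cases hb : (s x₀ ↔ c x₀ = 0)
    · left
      funext x y
      apply propext
      have hsx : s x ↔ c x = 0 := (hEall x).mp hb
      constructor
      · intro hR
        by_cases hxy : x = y
        · exact Or.inl hxy
        · exact Or.inr ⟨(hadj x y).mpr ⟨hxy, Or.inl hR⟩, hsx.mp ⟨y, Ne.symm hxy, hR⟩⟩
      · rintro (rfl | ⟨hK', hc0⟩)
        · exact hrefl x
        · rcases ((hadj x y).mp hK').2 with h | h
          · exact h
          · exact absurd (hC x y (hsx.mpr hc0) h) hK'.ne'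
    · right
      funext x y
      apply propext
      have hsx : s x ↔ c x = 1 := by
        have h1 : ¬(s x ↔ c x = 0) := fun h => hb ((hEall x).mpr h)
        rcases fin2_cover 0 1 (c x) (by decide) with h0 | h0
        · exact iff_of_false (fun hs => h1 (iff_of_true hs h0))
            (by rw [h0]; decide)
        · refine iff_of_true ?_ h0
          by_contra hns
          exact h1 (iff_of_false hns (by rw [h0]; decide))
      constructor
      · intro hR
        by_cases hxy : x = y
        · exact Or.inl hxy
        · exact Or.inr ⟨(hadj x y).mpr ⟨hxy, Or.inl hR⟩, hsx.mp ⟨y, Ne.symm hxy, hR⟩⟩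
      · rintro (rfl | ⟨hK', hc0⟩)
        · exact hrefl x
        · rcases ((hadj x y).mp hK').2 with h | h
          · exact h
          · exact absurd (hC x y (hsx.mpr hc0) h) hK'.ne'
  -- counting
  have hset : {R : (V × W) → (V × W) → Prop | IsPreorderRel R ∧ underGraph R = K}
      = {Rb 0, Rb 1} := by
    ext R
    constructor
    · rintro ⟨h1, h2⟩
      exact hUniq R h1 h2
    · rintro (rfl | rfl)
      · exact ⟨hRbPre 0, hRbGraph 0⟩
      · exact ⟨hRbPre 1, hRbGraph 1⟩
  show Nat.card ↥{R : (V × W) → (V × W) → Prop | IsPreorderRel R ∧ underGraph R = K} = 2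
  rw [Nat.card_coe_set_eq, hset, Set.ncard_pair hne01]
end

section
/- Let G be a connected simple graph on a finite vertex type V and let v ∈ V be a cut vertex of G, i.e., the induced subgraph of G on V \ {v} is not connected. Then for every preorder relation R on V whose underlying graph equals G, the vertex v is a sink of R or a source of R. -/
/-- A cut vertex of a connected graph is a sink or a source in every preorder relation
having that graph as its underlying graph. -/
theorem cutVertex_sink_or_source
    {V : Type*} [Fintype V] (G : SimpleGraph V) (hc : G.Connected) (v : V)
    (hcut : ¬ (G.induce {u : V | u ≠ v}).Connected)
    (R : V → V → Prop) (hR : IsPreorderRel R) (hRG : underGraph R = G) :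
    (∀ u : V, u ≠ v → ¬ R v u) ∨ (∀ u : V, u ≠ v → ¬ R u v) := by
  by_contra hcon
  push_neg at hcon
  obtain ⟨⟨a, ha, hva⟩, ⟨b, hb, hbv⟩⟩ := hcon
  obtain ⟨hrefl, htrans⟩ := hR
  subst hRG
  set H := (underGraph R).induce {u : V | u ≠ v} with hH
  have reach : ∀ (x y : V) (hx : x ≠ v) (hy : y ≠ v), R x y →
      H.Reachable ⟨x, hx⟩ ⟨y, hy⟩ := by
    intro x y hx hy hxy
    by_cases hxe : x = y
    · subst hxe; exact SimpleGraph.Reachable.refl _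
    · exact SimpleGraph.Adj.reachable (show (underGraph R).Adj x y from ⟨hxe, Or.inl hxy⟩)
  have detour : ∀ (x y : V) (hx : x ≠ v) (hy : y ≠ v),
      (underGraph R).Adj x v → (underGraph R).Adj v y → H.Reachable ⟨x, hx⟩ ⟨y, hy⟩ := by
    intro x y hx hy hxv hvy
    obtain ⟨_, hx1⟩ := hxv
    obtain ⟨_, hy1⟩ := hvy
    rcases hx1 with hxv | hvx
    · rcases hy1 with hvy' | hyv
      · exact reach x y hx hy (htrans hxv hvy')
      · exact (reach x a hx ha (htrans hxv hva)).trans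
          (reach y a hy ha (htrans hyv hva)).symm
    · rcases hy1 with hvy' | hyv
      · exact (reach b x hb hx (htrans hbv hvx)).symm.trans
          (reach b y hb hy (htrans hbv hvy'))
      · exact (reach y x hy hx (htrans hyv hvx)).symm
  have key : ∀ (n : ℕ) (x y : V) (hx : x ≠ v) (hy : y ≠ v)
      (w : (underGraph R).Walk x y), w.length = n → H.Reachable ⟨x, hx⟩ ⟨y, hy⟩ := by
    intro n
    induction n using Nat.strong_induction_on with
    | _ n ih =>
      intro x y hx hy w hlen
      cases w with
      | nil => exact SimpleGraph.Reachable.refl _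
      | @cons _ c _ hadj w' =>
        by_cases hcv : c = v
        · subst c
          cases w' with
          | nil => exact absurd rfl hy
          | @cons _ d _ hadj' w'' =>
            have hd : d ≠ v := fun h => (underGraph R).loopless.irrefl v (h ▸ hadj')
            refine (detour x d hx hd hadj hadj').trans ?_
            exact ih w''.length (by simp at hlen; omega) d y hd hy w'' rfl
        · refine (SimpleGraph.Adj.reachable
            (show H.Adj ⟨x, hx⟩ ⟨c, hcv⟩ from hadj)).trans ?_
          exact ih w'.length (by simp at hlen; omega) c y hcv hy w' rfl
  apply hcut
  have : Nonempty {u : V | u ≠ v} := ⟨⟨a, ha⟩⟩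
  constructor
  · rintro ⟨x, hx⟩ ⟨y, hy⟩
    obtain ⟨w⟩ := hc.preconnected x y
    exact key w.length x y hx hy w rfl
end

section
/- Let G be a simple graph on a finite vertex type V with a distinguished vertex u that has at least one neighbor in G, and let H be a simple graph on a finite vertex type W with a distinguished vertex v that has at least one neighbor in H. Let G *_{u=v} H be the amalgamation of G and H along u and v. Then τ(G *_{u=v} H) = 2 · τ_si(G, u) · τ_si(H, v), where τ_si(G, u) is the number of preorder relations on V with underlying graph G in which u is a sink, and similarly for τ_si(H, v). -/
set_option linter.unusedSectionVars false


/-- The amalgamation of `G` and `H` along `u ∈ V` and `v ∈ W`, on the vertex type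
`V ⊕ {w : W // w ≠ v}` (with `u` identified with `v`). -/
def amalg {V W : Type*} (G : SimpleGraph V) (H : SimpleGraph W) (u : V) (v : W) :
    SimpleGraph (V ⊕ {w : W // w ≠ v}) where
  Adj x y :=
    match x, y with
    | Sum.inl a, Sum.inl b => G.Adj a b
    | Sum.inr a, Sum.inr b => H.Adj a.1 b.1
    | Sum.inl a, Sum.inr b => a = u ∧ H.Adj v b.1
    | Sum.inr a, Sum.inl b => b = u ∧ H.Adj v a.1
  symm := by
    refine ⟨?_⟩
    rintro (a | a) (b | b) h
    · exact G.adj_symm h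
    · exact h
    · exact h
    · exact H.adj_symm h
  loopless := by
    refine ⟨?_⟩
    rintro (a | a) h
    · exact G.irrefl h
    · exact H.irrefl h

/-- `τ_si(G, v)`: the number of preorder relations on `V` with underlying graph `G`
in which `v` is a sink. -/
noncomputable def tauSink {V : Type*} (G : SimpleGraph V) (v : V) : ℕ :=
  Nat.card {R : V → V → Prop //
    (IsPreorderRel R ∧ underGraph R = G) ∧ ∀ u : V, u ≠ v → ¬ R v u}

open Classical in
/-- embedding of `W` into the amalgamated vertex set. -/
noncomputable def embW {V W : Type*} (u : V) (v : W) (w : W) : V ⊕ {w : W // w ≠ v} :=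
  if h : w = v then Sum.inl u else Sum.inr ⟨w, h⟩

/-- The relation restricted to `V`. -/
def extractV {V W : Type*} {v : W}
    (R : (V ⊕ {w : W // w ≠ v}) → (V ⊕ {w : W // w ≠ v}) → Prop) :
    V → V → Prop := fun a b => R (Sum.inl a) (Sum.inl b)

/-- The relation restricted to `W` (via `embW`). -/
noncomputable def extractW {V W : Type*} (u : V) (v : W)
    (R : (V ⊕ {w : W // w ≠ v}) → (V ⊕ {w : W // w ≠ v}) → Prop) :
    W → W → Prop := fun w1 w2 => R (embW u v w1) (embW u v w2)

/-- Build a relation on the amalgam from relations on the pieces, with `inl u` a sink. -/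
def buildRel {V W : Type*} (u : V) (v : W) (P : V → V → Prop) (Q : W → W → Prop) :
    (V ⊕ {w : W // w ≠ v}) → (V ⊕ {w : W // w ≠ v}) → Prop := fun x y =>
  match x, y with
  | Sum.inl a, Sum.inl b => P a b
  | Sum.inr a, Sum.inr b => Q a.1 b.1
  | Sum.inl _, Sum.inr _ => False
  | Sum.inr a, Sum.inl b => b = u ∧ Q a.1 v

lemma underGraph_adj_iff {X : Type*} {R : X → X → Prop} {K : SimpleGraph X}
    (h : underGraph R = K) (x y : X) : (x ≠ y ∧ (R x y ∨ R y x)) ↔ K.Adj x y := by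
  rw [← h]; exact Iff.rfl

lemma underGraph_flip {X : Type*} (R : X → X → Prop) :
    underGraph (flip R) = underGraph R := by
  ext x y
  exact and_congr_right fun _ => Or.comm

lemma isPreorderRel_flip {X : Type*} {R : X → X → Prop} (h : IsPreorderRel R) :
    IsPreorderRel (flip R) :=
  ⟨fun x => h.1 x, fun _ _ _ hab hbc => h.2 hbc hab⟩

section AuxAmalg

variable {V W : Type*} {G : SimpleGraph V} {H : SimpleGraph W} {u : V} {v : W}

lemma embW_injective : Function.Injective (embW u v) := by
  intro w1 w2 h
  unfold embW at h
  by_cases h1 : w1 = v <;> by_cases h2 : w2 = v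
  · rw [h1, h2]
  · rw [dif_pos h1, dif_neg h2] at h; exact absurd h (by simp)
  · rw [dif_neg h1, dif_pos h2] at h; exact absurd h (by simp)
  · rw [dif_neg h1, dif_neg h2] at h
    simpa using h

lemma amalg_adj_embW (w1 w2 : W) :
    (amalg G H u v).Adj (embW u v w1) (embW u v w2) ↔ H.Adj w1 w2 := by
  unfold embW
  by_cases h1 : w1 = v <;> by_cases h2 : w2 = v
  · rw [dif_pos h1, dif_pos h2, h1, h2]
    exact ⟨fun h => absurd h G.irrefl, fun h => absurd h H.irrefl⟩
  · rw [dif_pos h1, dif_neg h2, h1]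
    show (u = u ∧ H.Adj v w2) ↔ _
    simp
  · rw [dif_neg h1, dif_pos h2, h2]
    show (u = u ∧ H.Adj v w1) ↔ _
    simp [SimpleGraph.adj_comm]
  · rw [dif_neg h1, dif_neg h2]
    exact Iff.rfl

lemma cross_incomp {R : (V ⊕ {w : W // w ≠ v}) → (V ⊕ {w : W // w ≠ v}) → Prop}
    (hg : underGraph R = amalg G H u v) {a : V} (ha : a ≠ u) (b : {w : W // w ≠ v}) :
    ¬ R (Sum.inl a) (Sum.inr b) ∧ ¬ R (Sum.inr b) (Sum.inl a) := by
  have h := underGraph_adj_iff hg (Sum.inl a) (Sum.inr b)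
  have hadj : ¬ (amalg G H u v).Adj (Sum.inl a) (Sum.inr b) := fun hh => ha hh.1
  have : ¬ (R (Sum.inl a) (Sum.inr b) ∨ R (Sum.inr b) (Sum.inl a)) := by
    intro hor
    exact hadj (h.mp ⟨by simp, hor⟩)
  exact ⟨fun h1 => this (Or.inl h1), fun h1 => this (Or.inr h1)⟩

/-- Dichotomy: `inl u` cannot have both an outgoing and an incoming relation. -/
lemma no_source_and_sink
    (hu : ∃ x : V, G.Adj u x) (hv : ∃ w : W, H.Adj v w)
    {R : (V ⊕ {w : W // w ≠ v}) → (V ⊕ {w : W // w ≠ v}) → Prop}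
    (hpre : IsPreorderRel R) (hg : underGraph R = amalg G H u v)
    {y₀ y : V ⊕ {w : W // w ≠ v}} (h0 : y₀ ≠ Sum.inl u) (hc0 : R (Sum.inl u) y₀)
    (hy : y ≠ Sum.inl u) (hyc : R y (Sum.inl u)) : False := by
  have tr := hpre.2
  have crossL : ∀ {a : V}, a ≠ u → ∀ b, ¬ R (Sum.inl a) (Sum.inr b) :=
    fun ha b => (cross_incomp hg ha b).1
  have crossR : ∀ {a : V}, a ≠ u → ∀ b, ¬ R (Sum.inr b) (Sum.inl a) :=
    fun ha b => (cross_incomp hg ha b).2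
  match y₀, h0, hc0 with
  | Sum.inr b, h0, hc0 =>
    match y, hy, hyc with
    | Sum.inl a, hy, hyc =>
      exact crossL (fun h => hy (by rw [h])) b (tr hyc hc0)
    | Sum.inr b', hy, hyc =>
      obtain ⟨x, hx⟩ := hu
      have hxu : x ≠ u := fun h => G.irrefl (h ▸ hx)
      have hadj : (amalg G H u v).Adj (Sum.inl u) (Sum.inl x) := hx
      have := (underGraph_adj_iff hg (Sum.inl u) (Sum.inl x)).mpr hadj
      rcases this.2 with h1 | h1
      · exact crossR hxu b' (tr hyc h1)
      · exact crossL hxu b (tr h1 hc0)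
  | Sum.inl a, h0, hc0 =>
    have hau : a ≠ u := fun h => h0 (by rw [h])
    obtain ⟨w, hw⟩ := hv
    have hwv : w ≠ v := fun h => H.irrefl (h ▸ hw)
    have hadj : (amalg G H u v).Adj (Sum.inl u) (Sum.inr ⟨w, hwv⟩) := ⟨rfl, hw⟩
    have := (underGraph_adj_iff hg (Sum.inl u) (Sum.inr ⟨w, hwv⟩)).mpr hadj
    rcases this.2 with h1 | h1
    · match y, hy, hyc with
      | Sum.inl a', hy, hyc =>
        exact crossL (fun h => hy (by rw [h])) ⟨w, hwv⟩ (tr hyc h1)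
      | Sum.inr b', hy, hyc =>
        exact crossR hau b' (tr hyc hc0)
    · exact crossR hau ⟨w, hwv⟩ (tr h1 hc0)

section Extract

variable {R : (V ⊕ {w : W // w ≠ v}) → (V ⊕ {w : W // w ≠ v}) → Prop}
  (hpre : IsPreorderRel R) (hg : underGraph R = amalg G H u v)
  (hsink : ∀ y, y ≠ Sum.inl u → ¬ R (Sum.inl u) y)

include hpre hg hsink

lemma extractV_good :
    (IsPreorderRel (extractV R) ∧ underGraph (extractV R) = G) ∧
      ∀ x : V, x ≠ u → ¬ (extractV R) u x := by
  refine ⟨⟨⟨fun a => hpre.1 _, fun a b c hab hbc => hpre.2 hab hbc⟩, ?_⟩, ?_⟩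
  · ext a b
    have h := underGraph_adj_iff hg (Sum.inl a) (Sum.inl b)
    show (a ≠ b ∧ _) ↔ _
    rw [show (amalg G H u v).Adj (Sum.inl a) (Sum.inl b) ↔ G.Adj a b from Iff.rfl] at h
    rw [← h]
    exact and_congr_left fun _ => not_congr
      ⟨fun hh => by rw [hh], fun hh => Sum.inl.inj hh⟩
  · intro x hx hR
    exact hsink (Sum.inl x) (fun hh => hx (Sum.inl.inj hh)) hR

lemma extractW_good :
    (IsPreorderRel (extractW u v R) ∧ underGraph (extractW u v R) = H) ∧
      ∀ w : W, w ≠ v → ¬ (extractW u v R) v w := by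
  refine ⟨⟨⟨fun a => hpre.1 _, fun a b c hab hbc => hpre.2 hab hbc⟩, ?_⟩, ?_⟩
  · ext w1 w2
    have h := underGraph_adj_iff hg (embW u v w1) (embW u v w2)
    show (w1 ≠ w2 ∧ _) ↔ _
    rw [← amalg_adj_embW (G := G) w1 w2, ← h]
    exact and_congr_left fun _ => not_congr
      ⟨fun hh => by rw [hh], fun hh => embW_injective hh⟩
  · intro w hw hR
    have he : embW u v v = Sum.inl u := by simp [embW]
    have hw' : embW u v w ≠ Sum.inl u := by simp [embW, hw]
    have hR' : R (embW u v v) (embW u v w) := hR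
    rw [he] at hR'
    exact hsink _ hw' hR'

lemma build_extract : buildRel u v (extractV R) (extractW u v R) = R := by
  funext x y
  rcases x with a | a <;> rcases y with b | b
  · rfl
  · show False = _
    refine (eq_false ?_).symm
    by_cases ha : a = u
    · subst ha; exact hsink (Sum.inr b) (by simp)
    · exact (cross_incomp hg ha b).1
  · show (b = u ∧ extractW u v R a.1 v) = _
    have e1 : extractW u v R a.1 v = R (Sum.inr a) (Sum.inl u) := by
      show R (embW u v a.1) (embW u v v) = _
      rw [show embW u v a.1 = Sum.inr a by simp [embW, a.2],
        show embW u v v = Sum.inl u by simp [embW]]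
    apply propext
    constructor
    · rintro ⟨rfl, h⟩; rw [e1] at h; exact h
    · intro h
      by_cases hb : b = u
      · subst hb; exact ⟨rfl, by rw [e1]; exact h⟩
      · exact absurd h (cross_incomp hg hb a).2
  · show extractW u v R a.1 b.1 = _
    show R (embW u v a.1) (embW u v b.1) = _
    rw [show embW u v a.1 = Sum.inr a by simp [embW, a.2],
      show embW u v b.1 = Sum.inr b by simp [embW, b.2]]

end Extract

section Build

variable {P : V → V → Prop} {Q : W → W → Prop}
  (hP : (IsPreorderRel P ∧ underGraph P = G) ∧ ∀ x : V, x ≠ u → ¬ P u x)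
  (hQ : (IsPreorderRel Q ∧ underGraph Q = H) ∧ ∀ w : W, w ≠ v → ¬ Q v w)

include hP hQ

lemma build_isPreorder : IsPreorderRel (buildRel u v P Q) := by
  constructor
  · rintro (a | a)
    · exact hP.1.1.1 a
    · exact hQ.1.1.1 a.1
  · rintro (a | a) (b | b) (c | c) h1 h2
    · exact hP.1.1.2 h1 h2
    · exact h2
    · exact h1.elim
    · exact h1.elim
    · obtain ⟨hb, hq⟩ := h1
      by_cases hc : c = u
      · exact ⟨hc, hq⟩
      · exact absurd (hb ▸ h2) (hP.2 c hc)
    · exact h2.elim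
    · exact ⟨h2.1, hQ.1.1.2 h1 h2.2⟩
    · exact hQ.1.1.2 h1 h2

lemma build_sink : ∀ y, y ≠ Sum.inl u → ¬ (buildRel u v P Q) (Sum.inl u) y := by
  rintro (b | b) hb h
  · exact hP.2 b (fun hh => hb (by rw [hh])) h
  · exact h

lemma build_underGraph : underGraph (buildRel u v P Q) = amalg G H u v := by
  ext x y
  rcases x with a | a <;> rcases y with b | b
  · show (_ ≠ _ ∧ (P a b ∨ P b a)) ↔ G.Adj a b
    have h := underGraph_adj_iff hP.1.2 a b
    rw [← h]
    exact and_congr_left fun _ => not_congr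
      ⟨fun hh => Sum.inl.inj hh, fun hh => by rw [hh]⟩
  · show (_ ≠ _ ∧ (False ∨ (a = u ∧ Q b.1 v))) ↔ ((a = u ∧ H.Adj v b.1) : Prop)
    have h := underGraph_adj_iff hQ.1.2 v b.1
    constructor
    · rintro ⟨-, (h1 | ⟨rfl, h1⟩)⟩
      · exact h1.elim
      · exact ⟨rfl, h.mp ⟨fun hh => b.2 hh.symm, Or.inr h1⟩⟩
    · rintro ⟨rfl, hadj⟩
      have hx := h.mpr hadj
      rcases hx.2 with h1 | h1
      · exact absurd h1 (hQ.2 b.1 (fun hh => hx.1 hh.symm))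
      · exact ⟨by simp, Or.inr ⟨rfl, h1⟩⟩
  · show (_ ≠ _ ∧ ((b = u ∧ Q a.1 v) ∨ False)) ↔ ((b = u ∧ H.Adj v a.1) : Prop)
    have h := underGraph_adj_iff hQ.1.2 v a.1
    constructor
    · rintro ⟨-, (⟨rfl, h1⟩ | h1)⟩
      · exact ⟨rfl, h.mp ⟨fun hh => a.2 hh.symm, Or.inr h1⟩⟩
      · exact h1.elim
    · rintro ⟨rfl, hadj⟩
      have hx := h.mpr hadj
      rcases hx.2 with h1 | h1
      · exact absurd h1 (hQ.2 a.1 (fun hh => hx.1 hh.symm))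
      · exact ⟨by simp, Or.inl ⟨rfl, h1⟩⟩
  · show (_ ≠ _ ∧ (Q a.1 b.1 ∨ Q b.1 a.1)) ↔ H.Adj a.1 b.1
    have h := underGraph_adj_iff hQ.1.2 a.1 b.1
    rw [← h]
    exact and_congr_left fun _ => not_congr
      ⟨fun hh => Subtype.ext_iff.mp (Sum.inr.inj hh), fun hh => by rw [Subtype.ext hh]⟩

lemma extractV_build : extractV (buildRel u v P Q) = P := rfl

lemma extractW_build : extractW u v (buildRel u v P Q) = Q := by
  funext w1 w2
  apply propext
  by_cases h1 : w1 = v <;> by_cases h2 : w2 = v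
  · show buildRel u v P Q (embW u v w1) (embW u v w2) ↔ _
    rw [show embW u v w1 = Sum.inl u by simp [embW, h1],
      show embW u v w2 = Sum.inl u by simp [embW, h2], h1, h2]
    exact iff_of_true (hP.1.1.1 u) (hQ.1.1.1 v)
  · show buildRel u v P Q (embW u v w1) (embW u v w2) ↔ _
    rw [show embW u v w1 = Sum.inl u by simp [embW, h1],
      show embW u v w2 = Sum.inr ⟨w2, h2⟩ by simp [embW, h2], h1]
    exact iff_of_false (fun h => h) (hQ.2 w2 h2)
  · show buildRel u v P Q (embW u v w1) (embW u v w2) ↔ _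
    rw [show embW u v w2 = Sum.inl u by simp [embW, h2],
      show embW u v w1 = Sum.inr ⟨w1, h1⟩ by simp [embW, h1], h2]
    show (u = u ∧ Q w1 v) ↔ _
    simp
  · show buildRel u v P Q (embW u v w1) (embW u v w2) ↔ _
    rw [show embW u v w1 = Sum.inr ⟨w1, h1⟩ by simp [embW, h1],
      show embW u v w2 = Sum.inr ⟨w2, h2⟩ by simp [embW, h2]]
    exact Iff.rfl

lemma not_sink_flip_build (hu : ∃ x : V, G.Adj u x) :
    ¬ ∀ y, y ≠ Sum.inl u → ¬ (flip (buildRel u v P Q)) (Sum.inl u) y := by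
  intro hcon
  obtain ⟨x, hx⟩ := hu
  have hxu : x ≠ u := fun h => G.irrefl (h ▸ hx)
  have := (underGraph_adj_iff hP.1.2 u x).mpr hx
  rcases this.2 with h1 | h1
  · exact hP.2 x hxu h1
  · exact hcon (Sum.inl x) (fun h => hxu (Sum.inl.inj h)) h1

end Build

lemma flip_sink (hu : ∃ x : V, G.Adj u x) (hv : ∃ w : W, H.Adj v w)
    {R : (V ⊕ {w : W // w ≠ v}) → (V ⊕ {w : W // w ≠ v}) → Prop}
    (hpre : IsPreorderRel R) (hg : underGraph R = amalg G H u v)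
    (hsink : ¬ ∀ y, y ≠ Sum.inl u → ¬ R (Sum.inl u) y) :
    ∀ y, y ≠ Sum.inl u → ¬ (flip R) (Sum.inl u) y := by
  push_neg at hsink
  obtain ⟨y₀, h0, hc0⟩ := hsink
  intro y hy hyc
  exact no_source_and_sink hu hv hpre hg h0 hc0 hy hyc

open Classical in
/-- The central bijection. -/
noncomputable def amalgEquiv (hu : ∃ x : V, G.Adj u x) (hv : ∃ w : W, H.Adj v w) :
    {R : (V ⊕ {w : W // w ≠ v}) → (V ⊕ {w : W // w ≠ v}) → Prop //
       IsPreorderRel R ∧ underGraph R = amalg G H u v} ≃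
    Bool ×
      {P : V → V → Prop // (IsPreorderRel P ∧ underGraph P = G) ∧ ∀ x, x ≠ u → ¬ P u x} ×
      {Q : W → W → Prop // (IsPreorderRel Q ∧ underGraph Q = H) ∧ ∀ w, w ≠ v → ¬ Q v w} where
  toFun RR :=
    if hsink : ∀ y, y ≠ Sum.inl u → ¬ RR.1 (Sum.inl u) y then
      (true, ⟨extractV RR.1, extractV_good RR.2.1 RR.2.2 hsink⟩,
        ⟨extractW u v RR.1, extractW_good RR.2.1 RR.2.2 hsink⟩)
    else
      (false,
        ⟨extractV (flip RR.1),
          extractV_good (isPreorderRel_flip RR.2.1) ((underGraph_flip RR.1).trans RR.2.2)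
            (flip_sink hu hv RR.2.1 RR.2.2 hsink)⟩,
        ⟨extractW u v (flip RR.1),
          extractW_good (isPreorderRel_flip RR.2.1) ((underGraph_flip RR.1).trans RR.2.2)
            (flip_sink hu hv RR.2.1 RR.2.2 hsink)⟩)
  invFun x :=
    cond x.1
      ⟨buildRel u v x.2.1.1 x.2.2.1,
        build_isPreorder x.2.1.2 x.2.2.2, build_underGraph x.2.1.2 x.2.2.2⟩
      ⟨flip (buildRel u v x.2.1.1 x.2.2.1),
        isPreorderRel_flip (build_isPreorder x.2.1.2 x.2.2.2),
        (underGraph_flip _).trans (build_underGraph x.2.1.2 x.2.2.2)⟩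
  left_inv := by
    rintro ⟨R, hR⟩
    by_cases hsink : ∀ y, y ≠ Sum.inl u → ¬ R (Sum.inl u) y
    · dsimp only
      rw [dif_pos hsink]
      exact Subtype.ext (build_extract hR.1 hR.2 hsink)
    · dsimp only
      rw [dif_neg hsink]
      apply Subtype.ext
      show flip (buildRel u v (extractV (flip R)) (extractW u v (flip R))) = R
      rw [build_extract (isPreorderRel_flip hR.1) ((underGraph_flip R).trans hR.2)
        (flip_sink hu hv hR.1 hR.2 hsink)]
      rfl
  right_inv := by
    rintro ⟨b, P, Q⟩
    cases b
    · have hsnot := not_sink_flip_build P.2 Q.2 hu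
      dsimp only [cond]
      rw [dif_neg hsnot]
      exact congrArg (Prod.mk false)
        (congrArg₂ Prod.mk (Subtype.ext rfl) (Subtype.ext (extractW_build P.2 Q.2)))
    · have hs := build_sink P.2 Q.2
      dsimp only [cond]
      rw [dif_pos hs]
      exact congrArg (Prod.mk true)
        (congrArg₂ Prod.mk (Subtype.ext rfl) (Subtype.ext (extractW_build P.2 Q.2)))

end AuxAmalg

/-- `τ(G *_{u=v} H) = 2 · τ_si(G, u) · τ_si(H, v)` when `u` and `v` each have a
neighbor. -/
theorem tau_amalg
    {V W : Type*} [Fintype V] [Fintype W]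
    (G : SimpleGraph V) (H : SimpleGraph W) (u : V) (v : W)
    (hu : ∃ x : V, G.Adj u x) (hv : ∃ w : W, H.Adj v w) :
    tau (amalg G H u v) = 2 * tauSink G u * tauSink H v := by
  unfold tau tauSink
  rw [Nat.card_congr (amalgEquiv hu hv), Nat.card_prod, Nat.card_prod, mul_assoc]
  simp [Nat.card_eq_fintype_card]
end

section
/- Let n ≥ 3 and let Cₙ be the cycle graph on Fin n. Then: if n = 3 then τ(Cₙ) = 13 and ℏ(Cₙ) = 4; if n is odd and n ≥ 5 then τ(Cₙ) = 0 and ℏ(Cₙ) = 0; and if n is even then τ(Cₙ) = 2 and ℏ(Cₙ) = 1. -/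
section Aux

variable {m : ℕ}

lemma add_one_val (a : Fin (m+4)) : (a + 1).val = (a.val + 1) % (m+4) := by
  rw [Fin.val_add, Fin.val_one]

lemma add_one_iff {a b : Fin (m+4)} :
    a + 1 = b ↔ (a.val + 1 = b.val ∨ (a.val = m + 3 ∧ b.val = 0)) := by
  rw [Fin.ext_iff, add_one_val]
  have ha := a.isLt
  rcases Nat.lt_or_ge (a.val + 1) (m+4) with h | h
  · rw [Nat.mod_eq_of_lt h]; omega
  · have : a.val = m + 3 := by omega
    have hb := b.isLt
    rw [this, show (m+3+1) % (m+4) = 0 by rw [show m+3+1 = m+4 by omega, Nat.mod_self]]; omega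

lemma adj_iff {u v : Fin (m+4)} :
    (SimpleGraph.cycleGraph (m+4)).Adj u v ↔ (u + 1 = v ∨ v + 1 = u) := by
  have : (SimpleGraph.cycleGraph (m+2+2)).Adj u v ↔ (u - v = 1 ∨ v - u = 1) :=
    SimpleGraph.cycleGraph_adj
  rw [show m+4 = m+2+2 from rfl] at *
  rw [this, sub_eq_iff_eq_add, sub_eq_iff_eq_add]
  constructor
  · rintro (h | h)
    · exact Or.inr (by rw [h]; exact add_comm _ _)
    · exact Or.inl (by rw [h]; exact add_comm _ _)
  · rintro (h | h)
    · exact Or.inr (by rw [← h]; exact add_comm _ _)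
    · exact Or.inl (by rw [← h]; exact add_comm _ _)

lemma adj_iff' {u v : Fin (m+4)} :
    (SimpleGraph.cycleGraph (m+4)).Adj u v ↔
      ((u.val + 1 = v.val ∨ (u.val = m + 3 ∧ v.val = 0)) ∨
       (v.val + 1 = u.val ∨ (v.val = m + 3 ∧ u.val = 0))) := by
  rw [adj_iff, add_one_iff, add_one_iff]


open Classical in
noncomputable def toBoolRel {V : Type*} (G : SimpleGraph V) :
    {R : V → V → Prop // IsPreorderRel R ∧ underGraph R = G} ≃
    {f : V → V → Bool // (∀ x, f x x) ∧ (∀ x y z, f x y → f y z → f x z) ∧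
      (∀ x y, (x ≠ y ∧ (f x y ∨ f y x)) ↔ G.Adj x y)} where
  toFun R := ⟨fun x y => decide (R.1 x y), by
    obtain ⟨R, ⟨hr, ht⟩, hg⟩ := R
    refine ⟨fun x => by simp [hr x], fun x y z h1 h2 => by
      simp only [decide_eq_true_iff] at *; exact ht h1 h2, fun x y => ?_⟩
    simp only [decide_eq_true_iff]
    rw [← hg]; rfl⟩
  invFun f := ⟨fun x y => f.1 x y = true, by
    obtain ⟨f, h1, h2, h3⟩ := f
    refine ⟨⟨fun x => h1 x, fun _ _ _ a b => h2 _ _ _ a b⟩, ?_⟩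
    ext x y
    exact (h3 x y)⟩
  left_inv R := by
    ext x y
    simp only [decide_eq_true_iff]
  right_inv f := by
    ext x y
    simp

lemma tau_three : tau (SimpleGraph.cycleGraph 3) = 13 := by
  rw [tau, Nat.card_congr (toBoolRel _), Nat.card_eq_fintype_card]
  decide

def boolSetoid {V : Type*} (G : SimpleGraph V) :
    Setoid {f : V → V → Bool // (∀ x, f x x) ∧ (∀ x y z, f x y → f y z → f x z) ∧
      (∀ x y, (x ≠ y ∧ (f x y ∨ f y x)) ↔ G.Adj x y)} where
  r f g := ∃ σ : V ≃ V, ∀ x y, f.1 x y = g.1 (σ x) (σ y)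
  iseqv := by
    constructor
    · intro f; exact ⟨Equiv.refl V, fun x y => rfl⟩
    · rintro f g ⟨σ, h⟩
      exact ⟨σ.symm, fun x y => by
        simpa using (h (σ.symm x) (σ.symm y)).symm⟩
    · rintro f g k ⟨σ, h⟩ ⟨σ', h'⟩
      exact ⟨σ.trans σ', fun x y => (h x y).trans (h' (σ x) (σ y))⟩

open Classical in
noncomputable def quotEquiv {V : Type*} (G : SimpleGraph V) :
    Quotient (preSetoid G) ≃ Quotient (boolSetoid G) := by
  refine Quotient.congr (toBoolRel G) ?_
  rintro ⟨R, hR⟩ ⟨R', hR'⟩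
  constructor
  · rintro ⟨σ, h⟩
    refine ⟨σ, fun x y => ?_⟩
    show decide (R x y) = decide (R' (σ x) (σ y))
    rw [decide_eq_decide]
    exact h x y
  · rintro ⟨σ, h⟩
    refine ⟨σ, fun x y => ?_⟩
    have := h x y
    rw [show ((toBoolRel G) ⟨R, hR⟩).1 x y = decide (R x y) from rfl,
      show ((toBoolRel G) ⟨R', hR'⟩).1 (σ x) (σ y) = decide (R' (σ x) (σ y)) from rfl,
      decide_eq_decide] at this
    exact this

instance {V : Type*} [Fintype V] [DecidableEq V] (G : SimpleGraph V) [DecidableRel G.Adj] :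
    Fintype (Quotient (boolSetoid G)) :=
  @Quotient.fintype _ _ (boolSetoid G)
    (fun f g => inferInstanceAs (Decidable (∃ σ : V ≃ V, ∀ x y, f.1 x y = g.1 (σ x) (σ y))))

lemma hbar_three : hbar (SimpleGraph.cycleGraph 3) = 4 := by
  rw [hbar, Nat.card_congr (quotEquiv _), Nat.card_eq_fintype_card]
  decide

section general
variable {R : Fin (m+4) → Fin (m+4) → Prop}
  (hR : IsPreorderRel R) (hG : underGraph R = SimpleGraph.cycleGraph (m+4))

include hG in
lemma hAdj : ∀ x y, (x ≠ y ∧ (R x y ∨ R y x)) ↔ (SimpleGraph.cycleGraph (m+4)).Adj x y := by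
  intro x y
  rw [← hG]; rfl

lemma nonadj {x y z : Fin (m+4)} (h1 : x + 1 = y) (h2 : y + 1 = z) :
    ¬ (SimpleGraph.cycleGraph (m+4)).Adj x z ∧ x ≠ z ∧ x ≠ y ∧ y ≠ z := by
  rw [add_one_iff] at h1 h2
  rw [adj_iff']
  have := x.isLt; have := y.isLt; have := z.isLt
  refine ⟨by omega, ?_, ?_, ?_⟩ <;> (rw [Ne, Fin.ext_iff]; omega)

include hR hG in
lemma step {x y z : Fin (m+4)} (h1 : x + 1 = y) (h2 : y + 1 = z) :
    (R y z ↔ ¬ R x y) := by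
  obtain ⟨hnadj, hxz, hxy, hyz⟩ := nonadj h1 h2
  have haxy : (SimpleGraph.cycleGraph (m+4)).Adj x y := adj_iff.mpr (Or.inl h1)
  have hayz : (SimpleGraph.cycleGraph (m+4)).Adj y z := adj_iff.mpr (Or.inl h2)
  have dxy := ((hAdj hG x y).mpr haxy).2
  have dyz := ((hAdj hG y z).mpr hayz).2
  have a : ¬ (R x y ∧ R y z) := by
    rintro ⟨p, q⟩
    exact hnadj ((hAdj hG x z).mp ⟨hxz, Or.inl (hR.2 p q)⟩)
  have b : ¬ (R y x ∧ R z y) := by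
    rintro ⟨p, q⟩
    exact hnadj ((hAdj hG x z).mp ⟨hxz, Or.inr (hR.2 q p)⟩)
  tauto

include hR hG in
lemma antisym : ∀ x y, R x y → R y x → x = y := by
  have key : ∀ x y : Fin (m+4), x + 1 = y → ¬(R x y ∧ R y x) := by
    intro x y hxy ⟨p, q⟩
    obtain ⟨hnadj, hxz, _, hyz⟩ := nonadj hxy (rfl : y + 1 = y + 1)
    have dyz := ((hAdj hG y (y+1)).mpr (adj_iff.mpr (Or.inl rfl))).2
    rcases dyz with d | d
    · exact hnadj ((hAdj hG x (y+1)).mp ⟨hxz, Or.inl (hR.2 p d)⟩)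
    · exact hnadj ((hAdj hG x (y+1)).mp ⟨hxz, Or.inr (hR.2 d q)⟩)
  intro x y p q
  by_contra hne
  have hadj := (hAdj hG x y).mp ⟨hne, Or.inl p⟩
  rcases adj_iff.mp hadj with h | h
  · exact key x y h ⟨p, q⟩
  · exact key y x h ⟨q, p⟩

include hR hG in
lemma chain : ∀ k, ∀ hk : k < m+4,
    (R ⟨k, hk⟩ (⟨k, hk⟩ + 1) ↔ (R 0 (0 + 1) ↔ k % 2 = 0)) := by
  intro k
  induction k with
  | zero =>
    intro hk
    have : (⟨0, hk⟩ : Fin (m+4)) = 0 := by rw [Fin.ext_iff]; rfl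
    rw [this]
    simp
  | succ k ih =>
    intro hk
    have hk' : k < m+4 := by omega
    have hs : (⟨k, hk'⟩ : Fin (m+4)) + 1 = ⟨k+1, hk⟩ := add_one_iff.mpr (Or.inl rfl)
    have hstep := step hR hG hs (rfl : (⟨k+1, hk⟩ : Fin (m+4)) + 1 = _)
    rw [hstep, ← hs, ih hk']
    have : (k+1) % 2 = 0 ↔ ¬ (k % 2 = 0) := by omega
    tauto

include hR hG in
lemma even_of_exists : m % 2 = 0 := by
  have hlast : (⟨m+3, by omega⟩ : Fin (m+4)) + 1 = 0 := by
    rw [add_one_iff]; exact Or.inr ⟨rfl, rfl⟩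
  have h1 := step hR hG hlast (rfl : (0 : Fin (m+4)) + 1 = _)
  have h2 := chain hR hG (m+3) (by omega)
  rw [hlast] at h2
  by_contra hm
  have : (m+3) % 2 = 0 := by omega
  rw [this] at h2
  simp only [iff_true] at h2
  tauto

include hR hG in
lemma Rchar : ∀ x y, R x y ↔
    (x = y ∨ (x + 1 = y ∧ R x (x+1)) ∨ (y + 1 = x ∧ ¬ R y (y+1))) := by
  intro x y
  constructor
  · intro h
    by_cases hxy : x = y
    · exact Or.inl hxy
    · have hadj := (hAdj hG x y).mp ⟨hxy, Or.inl h⟩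
      rcases adj_iff.mp hadj with h1 | h1
      · exact Or.inr (Or.inl ⟨h1, by rw [h1]; exact h⟩)
      · refine Or.inr (Or.inr ⟨h1, fun hy => ?_⟩)
        rw [h1] at hy
        exact hxy (antisym hR hG x y h hy)
  · rintro (rfl | ⟨rfl, h⟩ | ⟨rfl, h⟩)
    · exact hR.1 x
    · exact h
    · rcases ((hAdj hG y (y+1)).mpr (adj_iff.mpr (Or.inl rfl))).2 with d | d
      · exact absurd d h
      · exact d

end general

def ModelRel (m : ℕ) (b : Prop) (x y : Fin (m+4)) : Prop :=
  x = y ∨ (x + 1 = y ∧ (b ↔ x.val % 2 = 0)) ∨ (y + 1 = x ∧ ¬(b ↔ y.val % 2 = 0))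

lemma parity_flip (hm : m % 2 = 0) {x y : Fin (m+4)} (h : x + 1 = y) :
    (x.val % 2 = 0 ↔ ¬ (y.val % 2 = 0)) := by
  rw [add_one_iff] at h
  have := x.isLt; have := y.isLt
  omega

lemma succ_inj' {x y z : Fin (m+4)} (h1 : x + 1 = z) (h2 : y + 1 = z) : x = y := by
  rw [add_one_iff] at h1 h2
  have := x.isLt; have := y.isLt; have := z.isLt
  rw [Fin.ext_iff]; omega

lemma model_preorder (hm : m % 2 = 0) (b : Prop) : IsPreorderRel (ModelRel m b) := by
  constructor
  · intro x; exact Or.inl rfl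
  · rintro x y z (rfl | ⟨h1, c1⟩ | ⟨h1, c1⟩) h2
    · exact h2
    · rcases h2 with rfl | ⟨h2, c2⟩ | ⟨h2, c2⟩
      · exact Or.inr (Or.inl ⟨h1, c1⟩)
      · -- y = x+1, z = y+1 : parity contradiction
        exact absurd c2 (by have := parity_flip hm h1; tauto)
      · -- y = x+1, y = z+1 : x = z
        exact Or.inl (succ_inj' h1 h2)
    · rcases h2 with rfl | ⟨h2, c2⟩ | ⟨h2, c2⟩
      · exact Or.inr (Or.inr ⟨h1, c1⟩)
      · -- x = y+1, z = y+1 : x = z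
        exact Or.inl (h1.symm.trans h2)
      · -- x = y+1, y = z+1 : parity contradiction
        exact absurd c1 (by have := parity_flip hm h2; tauto)

lemma model_graph (hm : m % 2 = 0) (b : Prop) :
    underGraph (ModelRel m b) = SimpleGraph.cycleGraph (m+4) := by
  ext x y
  show (x ≠ y ∧ (ModelRel m b x y ∨ ModelRel m b y x)) ↔ _
  rw [adj_iff]
  unfold ModelRel
  constructor
  · rintro ⟨hne, (rfl | ⟨h, _⟩ | ⟨h, _⟩) | (rfl | ⟨h, _⟩ | ⟨h, _⟩)⟩ <;> tauto
  · rintro (h | h)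
    · have hne : x ≠ y := (nonadj h rfl).2.2.1
      by_cases hb : b ↔ x.val % 2 = 0
      · exact ⟨hne, Or.inl (Or.inr (Or.inl ⟨h, hb⟩))⟩
      · exact ⟨hne, Or.inr (Or.inr (Or.inr ⟨h, hb⟩))⟩
    · have hne : y ≠ x := (nonadj h rfl).2.2.1
      by_cases hb : b ↔ y.val % 2 = 0
      · exact ⟨hne.symm, Or.inr (Or.inr (Or.inl ⟨h, hb⟩))⟩
      · exact ⟨hne.symm, Or.inl (Or.inr (Or.inr ⟨h, hb⟩))⟩

lemma model_congr {b b' : Prop} (h : b ↔ b') : ModelRel m b = ModelRel m b' := by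
  unfold ModelRel
  funext x y
  rw [h]

section general2
variable {R : Fin (m+4) → Fin (m+4) → Prop}
  (hR : IsPreorderRel R) (hG : underGraph R = SimpleGraph.cycleGraph (m+4))

include hR hG in
lemma R_eq_model : R = ModelRel m (R 0 (0+1)) := by
  funext x y
  apply propext
  rw [Rchar hR hG x y]
  unfold ModelRel
  have hx : R x (x+1) ↔ (R 0 (0+1) ↔ x.val % 2 = 0) := by
    have := chain hR hG x.val x.isLt
    rwa [Fin.eta] at this
  have hy : R y (y+1) ↔ (R 0 (0+1) ↔ y.val % 2 = 0) := by
    have := chain hR hG y.val y.isLt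
    rwa [Fin.eta] at this
  tauto

end general2

lemma succ_injective {x y : Fin (m+4)} (h : x + 1 = y + 1) : x = y := succ_inj' h rfl

lemma val01 : ((0 : Fin (m+4)) + 1).val = 1 := by
  have := add_one_iff.mp (rfl : (0 : Fin (m+4)) + 1 = 0 + 1)
  simp only [Fin.val_zero] at this
  omega

lemma model_iff_at01 (b : Prop) : ModelRel m b 0 (0+1) ↔ b := by
  unfold ModelRel
  have h1 : (0 : Fin (m+4)) ≠ 0 + 1 := by
    rw [Ne, Fin.ext_iff, Fin.val_zero, val01]; omega
  have h2 : ¬ ((0 : Fin (m+4)) + 1) + 1 = 0 := by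
    intro h
    rcases add_one_iff.mp h with h | h <;> rw [val01] at h <;> simp [Fin.val_zero] at h <;> omega
  simp only [Fin.val_zero]
  tauto

lemma iff_flip {b c d : Prop} (h : c ↔ ¬ d) : (b ↔ c) ↔ (¬ b ↔ d) := by tauto

lemma iff_flip' {b c d : Prop} (h : c ↔ ¬ d) : (¬(b ↔ c)) ↔ ¬(¬ b ↔ d) := not_congr (iff_flip h)

lemma model_shift (hm : m % 2 = 0) (b : Prop) (x y : Fin (m+4)) :
    ModelRel m b x y ↔ ModelRel m (¬ b) (x+1) (y+1) := by
  unfold ModelRel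
  have e1 : x = y ↔ x + 1 = y + 1 := ⟨fun h => by rw [h], succ_injective⟩
  have e2 : x + 1 = y ↔ (x+1) + 1 = y + 1 := ⟨fun h => by rw [h], succ_injective⟩
  have e3 : y + 1 = x ↔ (y+1) + 1 = x + 1 := ⟨fun h => by rw [h], succ_injective⟩
  have p1 := parity_flip hm (rfl : x + 1 = x + 1)
  have p2 := parity_flip hm (rfl : y + 1 = y + 1)
  exact or_congr e1 (or_congr (and_congr e2 (iff_flip p1)) (and_congr e3 (iff_flip' p2)))


abbrev SS (m : ℕ) := {R : Fin (m+4) → Fin (m+4) → Prop //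
  IsPreorderRel R ∧ underGraph R = SimpleGraph.cycleGraph (m+4)}

def modelElt (hm : m % 2 = 0) (b : Bool) : SS m :=
  ⟨ModelRel m (b = true), model_preorder hm _, model_graph hm _⟩

lemma modelElt_bij (hm : m % 2 = 0) : Function.Bijective (modelElt hm) := by
  constructor
  · intro b b' h
    have h2 : ModelRel m (b = true) 0 (0+1) = ModelRel m (b' = true) 0 (0+1) :=
      congrFun (congrFun (congrArg Subtype.val h) 0) (0+1)
    have e1 := model_iff_at01 (m := m) (b = true)
    have e2 := model_iff_at01 (m := m) (b' = true)
    rw [h2] at e1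
    cases b <;> cases b' <;> simp_all
  · rintro ⟨R, hpre, hg⟩
    by_cases h : R 0 (0+1)
    · exact ⟨true, Subtype.ext (((R_eq_model hpre hg).trans
        (model_congr (iff_of_true h rfl))).symm)⟩
    · exact ⟨false, Subtype.ext (((R_eq_model hpre hg).trans
        (model_congr (iff_of_false h (by simp)))).symm)⟩

lemma tau_even (hm : m % 2 = 0) : tau (SimpleGraph.cycleGraph (m+4)) = 2 := by
  rw [tau, Nat.card_congr (Equiv.ofBijective _ (modelElt_bij hm)).symm,
    Nat.card_eq_fintype_card, Fintype.card_bool]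

lemma model_rel (hm : m % 2 = 0) (c c' : Prop) :
    ∃ σ : Fin (m+4) ≃ Fin (m+4), ∀ x y, ModelRel m c x y ↔ ModelRel m c' (σ x) (σ y) := by
  by_cases h : (c ↔ c')
  · exact ⟨Equiv.refl _, fun x y => Iff.of_eq (congrFun (congrFun (model_congr h) x) y)⟩
  · have h' : ¬ c ↔ c' := by tauto
    refine ⟨Equiv.addRight 1, fun x y => ?_⟩
    have h1 := model_shift hm c x y
    rw [model_congr h'] at h1
    simpa using h1

lemma hbar_even (hm : m % 2 = 0) : hbar (SimpleGraph.cycleGraph (m+4)) = 1 := by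
  rw [hbar]
  have hsub : Subsingleton (Quotient (preSetoid (SimpleGraph.cycleGraph (m+4)))) := by
    constructor
    intro q q'
    induction q using Quotient.ind with | _ a =>
    induction q' using Quotient.ind with | _ a' =>
    obtain ⟨b, rfl⟩ := (modelElt_bij hm).2 a
    obtain ⟨b', rfl⟩ := (modelElt_bij hm).2 a'
    exact Quotient.sound (model_rel hm _ _)
  have hne : Nonempty (Quotient (preSetoid (SimpleGraph.cycleGraph (m+4)))) :=
    ⟨⟦modelElt hm true⟧⟩
  exact Nat.card_eq_one_iff_unique.mpr ⟨hsub, hne⟩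

lemma empty_odd (hm : ¬ m % 2 = 0) : IsEmpty (SS m) := by
  constructor
  rintro ⟨R, hpre, hg⟩
  exact hm (even_of_exists hpre hg)

lemma tau_odd (hm : ¬ m % 2 = 0) : tau (SimpleGraph.cycleGraph (m+4)) = 0 :=
  @Nat.card_of_isEmpty _ (empty_odd hm)

lemma hbar_odd (hm : ¬ m % 2 = 0) : hbar (SimpleGraph.cycleGraph (m+4)) = 0 := by
  have h := empty_odd hm
  have : IsEmpty (Quotient (preSetoid (SimpleGraph.cycleGraph (m+4)))) :=
    ⟨Quotient.ind (fun a => h.false a)⟩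
  exact Nat.card_of_isEmpty

end Aux

/-- The values of `τ` and `ℏ` for cycle graphs. -/
theorem tau_hbar_cycleGraph (n : ℕ) (hn : 3 ≤ n) :
    (n = 3 →
      tau (SimpleGraph.cycleGraph n) = 13 ∧ hbar (SimpleGraph.cycleGraph n) = 4) ∧
    (Odd n → 5 ≤ n →
      tau (SimpleGraph.cycleGraph n) = 0 ∧ hbar (SimpleGraph.cycleGraph n) = 0) ∧
    (Even n →
      tau (SimpleGraph.cycleGraph n) = 2 ∧ hbar (SimpleGraph.cycleGraph n) = 1) := by
  refine ⟨?_, ?_, ?_⟩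
  · rintro rfl
    exact ⟨tau_three, hbar_three⟩
  · intro hodd h5
    obtain ⟨m, rfl⟩ : ∃ m, n = m + 4 := ⟨n - 4, by omega⟩
    have hm : ¬ m % 2 = 0 := by
      rcases hodd with ⟨k, hk⟩; omega
    exact ⟨tau_odd hm, hbar_odd hm⟩
  · intro heven
    have h4 : 4 ≤ n := by
      rcases heven with ⟨k, hk⟩; omega
    obtain ⟨m, rfl⟩ : ∃ m, n = m + 4 := ⟨n - 4, by omega⟩
    have hm : m % 2 = 0 := by
      rcases heven with ⟨k, hk⟩; omega
    exact ⟨tau_even hm, hbar_even hm⟩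
end

section
/- For every natural number n ≥ 1, the number of isomorphism classes of preorder relations on Fin n whose underlying graph is the complete graph on Fin n (equivalently, of total preorders on Fin n up to isomorphism) equals 2^(n-1). -/
open Finset

open scoped Classical


variable {n : ℕ}

noncomputable def rkAux (R : Fin n → Fin n → Prop) (x : Fin n) : ℕ :=
  (Finset.univ.filter (fun z => R z x ∧ ¬ R x z)).card

lemma rk_le_iff {R : Fin n → Fin n → Prop} (htrans : Transitive R)
    (htot : ∀ x y, R x y ∨ R y x) (x y : Fin n) :
    rkAux R x ≤ rkAux R y ↔ R x y := by
  constructor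
  · intro h
    by_contra hxy
    have hyx : R y x := (htot x y).resolve_left hxy
    have hins : insert y (Finset.univ.filter (fun z => R z y ∧ ¬ R y z)) ⊆
        Finset.univ.filter (fun z => R z x ∧ ¬ R x z) := by
      intro z hz
      simp only [mem_insert, mem_filter, mem_univ, true_and] at hz ⊢
      rcases hz with rfl | ⟨h1, h2⟩
      · exact ⟨hyx, hxy⟩
      · exact ⟨htrans h1 hyx, fun hc => h2 (htrans hyx hc)⟩
    have hy : y ∉ Finset.univ.filter (fun z => R z y ∧ ¬ R y z) := by
      simp
    have h2 := Finset.card_le_card hins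
    rw [Finset.card_insert_of_notMem hy] at h2
    unfold rkAux at h
    omega
  · intro hxy
    apply Finset.card_le_card
    intro z hz
    simp only [mem_filter, mem_univ, true_and] at hz ⊢
    exact ⟨htrans hz.1 hxy, fun hc => hz.2 (htrans hxy hc)⟩

lemma rk_rankprop {R : Fin n → Fin n → Prop} (htrans : Transitive R)
    (htot : ∀ x y, R x y ∨ R y x) (x : Fin n) :
    rkAux R x = (Finset.univ.filter (fun y => rkAux R y < rkAux R x)).card := by
  conv_lhs => rw [rkAux]
  congr 1
  apply Finset.filter_congr
  intro z _
  rw [lt_iff_le_not_ge, rk_le_iff htrans htot, rk_le_iff htrans htot]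

def RankProp (r : Fin n → ℕ) : Prop :=
  ∀ x, r x = (Finset.univ.filter (fun y => r y < r x)).card

lemma card_filter_lt_of_mem {r : Fin n → ℕ} (hr : RankProp r) {v : ℕ}
    (hv : v ∈ Finset.univ.image r) :
    (Finset.univ.filter (fun y => r y < v)).card = v := by
  obtain ⟨x, -, rfl⟩ := Finset.mem_image.mp hv
  exact (hr x).symm

noncomputable def nextVal (S : Finset ℕ) (v : ℕ) : ℕ :=
  if h : (S.filter (fun u => v < u)).Nonempty then (S.filter (fun u => v < u)).min' h else n

lemma card_filter_le {r : Fin n → ℕ} (hr : RankProp r) (v : ℕ) :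
    (Finset.univ.filter (fun y => r y ≤ v)).card = nextVal (n := n) (Finset.univ.image r) v := by
  unfold nextVal
  split_ifs with h
  · have hwmem := Finset.min'_mem _ h
    rw [Finset.mem_filter] at hwmem
    have heq : (Finset.univ.filter (fun y => r y ≤ v)) =
        (Finset.univ.filter (fun y => r y < ((Finset.univ.image r).filter (fun u => v < u)).min' h)) := by
      apply Finset.filter_congr
      intro y _
      constructor
      · intro hy
        exact lt_of_le_of_lt hy hwmem.2
      · intro hy
        by_contra hvy
        have hmem : r y ∈ (Finset.univ.image r).filter (fun u => v < u) := by
          rw [Finset.mem_filter]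
          exact ⟨Finset.mem_image_of_mem r (Finset.mem_univ y), by omega⟩
        exact absurd (Finset.min'_le _ _ hmem) (by omega)
    rw [heq, card_filter_lt_of_mem hr hwmem.1]
  · have : (Finset.univ.filter (fun y => r y ≤ v)) = Finset.univ := by
      apply Finset.filter_true_of_mem
      intro y _
      by_contra hy
      exact h ⟨r y, Finset.mem_filter.mpr ⟨Finset.mem_image_of_mem r (Finset.mem_univ y), by omega⟩⟩
    rw [this, Finset.card_univ, Fintype.card_fin]

lemma fiber_card_eq {r s : Fin n → ℕ} (hr : RankProp r) (hs : RankProp s)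
    (him : Finset.univ.image r = Finset.univ.image s) (v : ℕ) :
    (Finset.univ.filter (fun y => r y = v)).card =
      (Finset.univ.filter (fun y => s y = v)).card := by
  by_cases hv : v ∈ Finset.univ.image r
  · have key : ∀ (t : Fin n → ℕ), RankProp t → v ∈ Finset.univ.image t →
        (Finset.univ.filter (fun y => t y = v)).card =
          nextVal (n := n) (Finset.univ.image t) v - v := by
      intro t ht hvt
      have hsplit : (Finset.univ.filter (fun y => t y ≤ v)) =
          (Finset.univ.filter (fun y => t y < v)) ∪ (Finset.univ.filter (fun y => t y = v)) := by
        ext y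
        simp only [Finset.mem_union, Finset.mem_filter, Finset.mem_univ, true_and]
        omega
      have hdisj : Disjoint (Finset.univ.filter (fun y => t y < v))
          (Finset.univ.filter (fun y => t y = v)) := by
        rw [Finset.disjoint_left]
        intro y hy1 hy2
        simp only [Finset.mem_filter] at hy1 hy2
        omega
      have := Finset.card_union_of_disjoint hdisj
      rw [← hsplit, card_filter_le ht, card_filter_lt_of_mem ht hvt] at this
      omega
    rw [key r hr hv, key s hs (him ▸ hv), him]
  · have hv' : v ∉ Finset.univ.image s := him ▸ hv
    have e1 : (Finset.univ.filter (fun y => r y = v)) = ∅ := by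
      rw [Finset.filter_eq_empty_iff]
      intro y _ hy
      exact hv (hy ▸ Finset.mem_image_of_mem r (Finset.mem_univ y))
    have e2 : (Finset.univ.filter (fun y => s y = v)) = ∅ := by
      rw [Finset.filter_eq_empty_iff]
      intro y _ hy
      exact hv' (hy ▸ Finset.mem_image_of_mem s (Finset.mem_univ y))
    rw [e1, e2]

lemma exists_equiv_of_fiber_card {r s : Fin n → ℕ}
    (hfib : ∀ v, (Finset.univ.filter (fun y => r y = v)).card =
      (Finset.univ.filter (fun y => s y = v)).card) :
    ∃ σ : Fin n ≃ Fin n, ∀ x, s (σ x) = r x := by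
  have e : ∀ v : ℕ, Nonempty ({x : Fin n // r x = v} ≃ {x : Fin n // s x = v}) := by
    intro v
    apply Fintype.card_eq.mp
    rw [Fintype.card_subtype, Fintype.card_subtype, hfib v]
  let E : ∀ v : ℕ, {x : Fin n // r x = v} ≃ {x : Fin n // s x = v} :=
    fun v => Classical.choice (e v)
  refine ⟨(Equiv.sigmaFiberEquiv r).symm.trans
    ((Equiv.sigmaCongrRight E).trans (Equiv.sigmaFiberEquiv s)), ?_⟩
  intro x
  simp only [Equiv.trans_apply, Equiv.sigmaFiberEquiv, Equiv.coe_fn_symm_mk,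
    Equiv.sigmaCongrRight_apply, Sigma.map, Equiv.coe_fn_mk]
  exact (E (r x) ⟨x, rfl⟩).2

lemma rk_equivar {R R' : Fin n → Fin n → Prop} (σ : Fin n ≃ Fin n)
    (h : ∀ x y, R x y ↔ R' (σ x) (σ y)) (x : Fin n) :
    rkAux R' (σ x) = rkAux R x := by
  unfold rkAux
  apply Finset.card_bij' (fun z _ => σ.symm z) (fun z _ => σ z)
  · intro z hz
    simp only [Finset.mem_filter, Finset.mem_univ, true_and] at hz ⊢
    rw [h, h]
    simpa using hz
  · intro z hz
    simp only [Finset.mem_filter, Finset.mem_univ, true_and] at hz ⊢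
    rw [← h, ← h]
    exact hz
  · intro z _; simp
  · intro z _; simp

/-- canonical rank function attached to a finset `S` containing `0`. -/
noncomputable def rhoAux (S : Finset ℕ) (h0 : 0 ∈ S) (i : Fin n) : ℕ :=
  (S.filter (fun v => v ≤ i.1)).max' ⟨0, Finset.mem_filter.mpr ⟨h0, Nat.zero_le _⟩⟩

lemma rho_le (S : Finset ℕ) (h0 : 0 ∈ S) (i : Fin n) : rhoAux S h0 i ≤ i.1 := by
  apply Finset.max'_le
  intro v hv
  exact (Finset.mem_filter.mp hv).2

lemma rho_mem (S : Finset ℕ) (h0 : 0 ∈ S) (i : Fin n) : rhoAux S h0 i ∈ S :=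
  (Finset.mem_filter.mp (Finset.max'_mem _ _)).1

lemma le_rho (S : Finset ℕ) (h0 : 0 ∈ S) {v : ℕ} (hv : v ∈ S) (i : Fin n) (hvi : v ≤ i.1) :
    v ≤ rhoAux S h0 i := by
  unfold rhoAux
  exact Finset.le_max' (S.filter (fun u => u ≤ i.1)) v (Finset.mem_filter.mpr ⟨hv, hvi⟩)

lemma rho_filter_lt (S : Finset ℕ) (h0 : 0 ∈ S) (x : Fin n) :
    (Finset.univ.filter (fun y => rhoAux S h0 y < rhoAux S h0 x)) =
      (Finset.univ.filter (fun y : Fin n => y.1 < rhoAux S h0 x)) := by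
  apply Finset.filter_congr
  intro y _
  constructor
  · intro hy
    by_contra hc
    exact absurd (le_rho S h0 (rho_mem S h0 x) y (by omega)) (by omega)
  · intro hy
    exact lt_of_le_of_lt (rho_le S h0 y) hy

lemma card_val_lt (m : ℕ) (hm : m < n) :
    (Finset.univ.filter (fun y : Fin n => y.1 < m)).card = m := by
  have : (Finset.univ.filter (fun y : Fin n => y.1 < m)) = Finset.Iio (⟨m, hm⟩ : Fin n) := by
    ext y
    simp [Fin.lt_def]
  rw [this, Fin.card_Iio]

lemma rho_rankprop (S : Finset ℕ) (h0 : 0 ∈ S) :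
    RankProp (rhoAux (n := n) S h0) := by
  intro x
  rw [rho_filter_lt, card_val_lt _ (lt_of_le_of_lt (rho_le S h0 x) x.2)]

lemma rho_image (S : Finset ℕ) (h0 : 0 ∈ S) (hSn : ∀ v ∈ S, v < n) :
    Finset.univ.image (rhoAux (n := n) S h0) = S := by
  apply Finset.Subset.antisymm
  · intro v hv
    obtain ⟨i, -, rfl⟩ := Finset.mem_image.mp hv
    exact rho_mem S h0 i
  · intro v hv
    apply Finset.mem_image.mpr
    refine ⟨⟨v, hSn v hv⟩, Finset.mem_univ _, ?_⟩
    exact le_antisymm (rho_le S h0 _) (le_rho S h0 hv _ le_rfl)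

lemma zero_mem_image {r : Fin n → ℕ} (hn : 1 ≤ n) (hr : RankProp r) :
    0 ∈ Finset.univ.image r := by
  haveI : Nonempty (Fin n) := ⟨⟨0, hn⟩⟩
  obtain ⟨x, -, hx⟩ := Finset.exists_min_image Finset.univ r Finset.univ_nonempty
  have hempty : (Finset.univ.filter (fun y => r y < r x)) = ∅ := by
    rw [Finset.filter_eq_empty_iff]
    intro y _
    exact not_lt.mpr (hx y (Finset.mem_univ y))
  have hx0 : r x = 0 := by rw [hr x, hempty, Finset.card_empty]
  exact Finset.mem_image.mpr ⟨x, Finset.mem_univ x, hx0⟩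

lemma rk_lt {R : Fin n → Fin n → Prop} (hrefl : Reflexive R) (x : Fin n) :
    rkAux R x < n := by
  have hx : x ∉ Finset.univ.filter (fun z => R z x ∧ ¬ R x z) := by
    simp [hrefl x]
  have hsub : Finset.univ.filter (fun z => R z x ∧ ¬ R x z) ⊆ Finset.univ.erase x := by
    intro z hz
    refine Finset.mem_erase.mpr ⟨?_, Finset.mem_univ z⟩
    rintro rfl
    exact hx hz
  have := Finset.card_le_card hsub
  rw [Finset.card_erase_of_mem (Finset.mem_univ x), Finset.card_univ, Fintype.card_fin] at this
  have hn : 0 < n := x.pos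
  unfold rkAux
  omega

lemma total_of_top {R : Fin n → Fin n → Prop} (h1 : IsPreorderRel R)
    (h2 : underGraph R = (⊤ : SimpleGraph (Fin n))) : ∀ x y, R x y ∨ R y x := by
  intro x y
  rcases eq_or_ne x y with rfl | hne
  · exact Or.inl (h1.1 x)
  · have hadj : (underGraph R).Adj x y ↔ ((⊤ : SimpleGraph (Fin n))).Adj x y := by rw [h2]
    simp only [underGraph, SimpleGraph.top_adj] at hadj
    exact (hadj.mpr hne).2

/-- The number of isomorphism classes of preorder relations on `Fin n` whose underlying
graph is the complete graph equals `2 ^ (n - 1)`. -/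
theorem hbar_completeGraph (n : ℕ) (hn : 1 ≤ n) :
    hbar (⊤ : SimpleGraph (Fin n)) = 2 ^ (n - 1) := by
  classical
  unfold hbar
  -- the invariant map
  have memP : ∀ (R : {R : Fin n → Fin n → Prop //
      IsPreorderRel R ∧ underGraph R = (⊤ : SimpleGraph (Fin n))}),
      (Finset.univ.image (rkAux R.1)).erase 0 ∈ (Finset.Ioo 0 n).powerset := by
    intro R
    rw [Finset.mem_powerset]
    intro v hv
    rw [Finset.mem_erase] at hv
    obtain ⟨hv0, hv1⟩ := hv
    obtain ⟨x, -, rfl⟩ := Finset.mem_image.mp hv1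
    exact Finset.mem_Ioo.mpr ⟨Nat.pos_of_ne_zero hv0, rk_lt R.2.1.1 x⟩
  let Φ : Quotient (preSetoid (⊤ : SimpleGraph (Fin n))) →
      {T : Finset ℕ // T ∈ (Finset.Ioo 0 n).powerset} :=
    Quotient.lift (fun R => ⟨(Finset.univ.image (rkAux R.1)).erase 0, memP R⟩)
      (by
        rintro R R' ⟨σ, h⟩
        have himg : Finset.univ.image (rkAux R.1) = Finset.univ.image (rkAux R'.1) := by
          ext v
          simp only [Finset.mem_image, Finset.mem_univ, true_and]
          constructor
          · rintro ⟨x, rfl⟩; exact ⟨σ x, rk_equivar σ h x⟩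
          · rintro ⟨x, rfl⟩
            exact ⟨σ.symm x, by rw [← rk_equivar σ h (σ.symm x), Equiv.apply_symm_apply]⟩
        simp only [himg])
  have hbij : Function.Bijective Φ := by
    constructor
    · rintro q q'
      induction q using Quotient.ind
      induction q' using Quotient.ind
      rename_i R R'
      intro heq
      simp only [Φ, Quotient.lift_mk, Subtype.mk.injEq] at heq
      have hrp : RankProp (rkAux R.1) := fun x =>
        rk_rankprop R.2.1.2 (total_of_top R.2.1 R.2.2) x
      have hrp' : RankProp (rkAux R'.1) := fun x =>
        rk_rankprop R'.2.1.2 (total_of_top R'.2.1 R'.2.2) x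
      have h0 : 0 ∈ Finset.univ.image (rkAux R.1) := zero_mem_image hn hrp
      have h0' : 0 ∈ Finset.univ.image (rkAux R'.1) := zero_mem_image hn hrp'
      have himg : Finset.univ.image (rkAux R.1) = Finset.univ.image (rkAux R'.1) := by
        rw [← Finset.insert_erase h0, ← Finset.insert_erase h0', heq]
      obtain ⟨σ, hσ⟩ := exists_equiv_of_fiber_card (fiber_card_eq hrp hrp' himg)
      apply Quotient.sound
      refine ⟨σ, fun x y => ?_⟩
      rw [← rk_le_iff R.2.1.2 (total_of_top R.2.1 R.2.2),
        ← rk_le_iff R'.2.1.2 (total_of_top R'.2.1 R'.2.2), hσ x, hσ y]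
    · rintro ⟨T, hT⟩
      rw [Finset.mem_powerset] at hT
      have h0T : 0 ∉ T := fun h => by simpa using Finset.mem_Ioo.mp (hT h)
      have h0 : 0 ∈ insert 0 T := Finset.mem_insert_self 0 T
      set ρ := rhoAux (n := n) (insert 0 T) h0 with hρ
      have hSn : ∀ v ∈ insert 0 T, v < n := by
        intro v hv
        rcases Finset.mem_insert.mp hv with rfl | hv
        · omega
        · exact (Finset.mem_Ioo.mp (hT hv)).2
      refine ⟨⟦⟨fun x y => ρ x ≤ ρ y, ⟨⟨fun x => le_refl _, fun _ _ _ h1 h2 => le_trans h1 h2⟩, ?_⟩⟩⟧, ?_⟩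
      · apply SimpleGraph.ext
        ext x y
        simp only [underGraph, SimpleGraph.top_adj]
        constructor
        · exact fun h => h.1
        · exact fun h => ⟨h, le_total (ρ x) (ρ y)⟩
      · apply Subtype.ext
        simp only [Φ, Quotient.lift_mk]
        have hrk : rkAux (fun x y => ρ x ≤ ρ y) = ρ := by
          funext x
          have h1 : (Finset.univ.filter (fun z => ρ z ≤ ρ x ∧ ¬ ρ x ≤ ρ z)) =
              (Finset.univ.filter (fun y => ρ y < ρ x)) := by
            apply Finset.filter_congr
            intro z _
            rw [lt_iff_le_not_ge]
          have h2 : rkAux (fun x y => ρ x ≤ ρ y) x =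
              (Finset.univ.filter (fun z => ρ z ≤ ρ x ∧ ¬ ρ x ≤ ρ z)).card := by
            unfold rkAux
            congr 1
            ext z
            simp only [Finset.mem_filter]
          rw [h2, h1, rho_filter_lt, card_val_lt _ (lt_of_le_of_lt (rho_le _ h0 x) x.2)]
        rw [hrk, hρ, rho_image _ h0 hSn, Finset.erase_insert h0T]
  rw [Nat.card_congr (Equiv.ofBijective Φ hbij), Nat.card_eq_finsetCard,
    Finset.card_powerset, Nat.card_Ioo]
  norm_num
end
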